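/- arXiv:1311.1918 — 5 statements merged into one kernel-verified Lean document; each statement's English description precedes it below -/
import Mathlib

section
/- Let D ⊆ ℝ^d be a compact convex set with 0 in its interior, μ, ν Borel probability measures on ℝ^d admitting a coupling of finite ‖·‖_{D*}-cost, and ψ : ℝ^d → ℝ a Kantorovich potential, i.e. ψ(y) − ψ(x) ≤ ‖y − x‖_{D*} for all x, y, and a coupling π ∈ Π(μ,ν) is optimal for the cost ‖y − x‖_{D*} if and only if π({(x,y) : ψ(y) − ψ(x) = ‖y − x‖_{D*}}) = 1. Set μ̂ := (id,ψ)_#μ, ν̂ := (id,ψ)_#ν, and let c_epi((x,s),(y,t)) := 0 if ‖y − x‖_{D*} ≤ t − s and +∞ otherwise (the cone cost of epi ‖·‖_{D*} on ℝ^{d+1}). Then for π ∈ Π(μ,ν) the following are equivalent: (1) π ∈ Π^opt_{‖·‖_{D*}}(μ,ν); (2) π̂ := ((id,ψ)×(id,ψ))_#π ∈ Π^f_{c_epi}(μ̂,ν̂); (3) π = (p_{ℝ^d} × p_{ℝ^d})_# π̂' for some π̂' ∈ Π^f_{c_epi}(μ̂,ν̂); (4) π̂ gives full measure to ∂⁺graph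 ψ := {((x,ψ(x)),(y,ψ(y))) : ψ(y) − ψ(x) = ‖y − x‖_{D*}}. -/
open MeasureTheory Set
open scoped ENNReal

noncomputable section

abbrev Euc (d : ℕ) : Type := EuclideanSpace ℝ (Fin d)

def IsCoupling {X : Type*} [MeasurableSpace X] (π : Measure (X × X)) (μ ν : Measure X) : Prop :=
  π.map Prod.fst = μ ∧ π.map Prod.snd = ν

/-- The transport cost `c(x,y) = ‖y - x‖_{D*}` given by the Minkowski gauge of `D`. -/
def normCost {d : ℕ} (D : Set (Euc d)) (p : Euc d × Euc d) : ℝ≥0∞ :=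
  ENNReal.ofReal (gauge D (p.2 - p.1))

def IsOptimalCoupling {X : Type*} [MeasurableSpace X] (c : X × X → ℝ≥0∞)
    (π : Measure (X × X)) (μ ν : Measure X) : Prop :=
  IsCoupling π μ ν ∧ ∀ π', IsCoupling π' μ ν → ∫⁻ p, c p ∂π ≤ ∫⁻ p, c p ∂π'

open Classical in
/-- The cone cost of `epi ‖·‖_{D*} ⊆ ℝ^{d+1}`. -/
def epiCost {d : ℕ} (D : Set (Euc d)) (q : (Euc d × ℝ) × (Euc d × ℝ)) : ℝ≥0∞ :=
  if gauge D (q.2.1 - q.1.1) ≤ q.2.2 - q.1.2 then 0 else ⊤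

lemma epiCost_lintegral {d : ℕ} (D : Set (Euc d)) (hDcv : Convex ℝ D)
    (hD0 : (0 : Euc d) ∈ interior D) (m : Measure ((Euc d × ℝ) × (Euc d × ℝ))) :
    ∫⁻ q, epiCost D q ∂m
      = ⊤ * m {q | gauge D (q.2.1 - q.1.1) ≤ q.2.2 - q.1.2}ᶜ := by
  have hgc : Continuous (gauge D) := continuous_gauge hDcv (mem_interior_iff_mem_nhds.mp hD0)
  have hA : MeasurableSet
      {q : (Euc d × ℝ) × (Euc d × ℝ) | gauge D (q.2.1 - q.1.1) ≤ q.2.2 - q.1.2} := by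
    apply (isClosed_le ?_ ?_).measurableSet
    · exact hgc.comp ((continuous_fst.comp continuous_snd).sub (continuous_fst.comp continuous_fst))
    · exact (continuous_snd.comp continuous_snd).sub (continuous_snd.comp continuous_fst)
  calc ∫⁻ q, epiCost D q ∂m
      = ∫⁻ q, ({q : (Euc d × ℝ) × (Euc d × ℝ) |
          gauge D (q.2.1 - q.1.1) ≤ q.2.2 - q.1.2}ᶜ).indicator (fun _ => (⊤ : ℝ≥0∞)) q ∂m := by
        refine lintegral_congr fun q => ?_
        by_cases h : gauge D (q.2.1 - q.1.1) ≤ q.2.2 - q.1.2 <;>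
          simp [epiCost, h, Set.indicator_apply]
    _ = ⊤ * m {q | gauge D (q.2.1 - q.1.1) ≤ q.2.2 - q.1.2}ᶜ :=
        lintegral_indicator_const hA.compl _

/-- **Lifting of the convex norm transport problem to the cone cost problem on the
graph of a Kantorovich potential** (Proposition 3.6 of Bianchini–Daneri). -/
theorem statement_6 {d : ℕ} (D : Set (Euc d))
    (hDcp : IsCompact D) (hDcv : Convex ℝ D) (hD0 : (0 : Euc d) ∈ interior D)
    (μ ν : Measure (Euc d)) [IsProbabilityMeasure μ] [IsProbabilityMeasure ν]
    (hfin : ∃ π₀ : Measure (Euc d × Euc d), IsCoupling π₀ μ ν ∧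
      ∫⁻ p, normCost D p ∂π₀ ≠ ⊤)
    (ψ : Euc d → ℝ)
    (hψLip : ∀ x y : Euc d, ψ y - ψ x ≤ gauge D (y - x))
    (hψpot : ∀ π : Measure (Euc d × Euc d), IsCoupling π μ ν →
      (IsOptimalCoupling (normCost D) π μ ν ↔
        π {p : Euc d × Euc d | ψ p.2 - ψ p.1 = gauge D (p.2 - p.1)} = 1))
    (π : Measure (Euc d × Euc d)) (hπ : IsCoupling π μ ν) :
    (IsOptimalCoupling (normCost D) π μ ν ↔
      (IsCoupling (π.map (Prod.map (fun x => (x, ψ x)) (fun x => (x, ψ x))))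
          (μ.map (fun x => (x, ψ x))) (ν.map (fun x => (x, ψ x))) ∧
        ∫⁻ q, epiCost D q ∂(π.map (Prod.map (fun x => (x, ψ x)) (fun x => (x, ψ x)))) ≠ ⊤)) ∧
    (IsOptimalCoupling (normCost D) π μ ν ↔
      ∃ πh : Measure ((Euc d × ℝ) × (Euc d × ℝ)),
        IsCoupling πh (μ.map (fun x => (x, ψ x))) (ν.map (fun x => (x, ψ x))) ∧
        ∫⁻ q, epiCost D q ∂πh ≠ ⊤ ∧
        π = πh.map (fun q => (q.1.1, q.2.1))) ∧
    (IsOptimalCoupling (normCost D) π μ ν ↔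
      (π.map (Prod.map (fun x => (x, ψ x)) (fun x => (x, ψ x))))
        {q : (Euc d × ℝ) × (Euc d × ℝ) |
          q.1.2 = ψ q.1.1 ∧ q.2.2 = ψ q.2.1 ∧ ψ q.2.1 - ψ q.1.1 = gauge D (q.2.1 - q.1.1)} = 1) := by
  have hgc : Continuous (gauge D) := continuous_gauge hDcv (mem_interior_iff_mem_nhds.mp hD0)
  -- ψ is continuous
  have hψc : Continuous ψ := by
    rw [continuous_iff_continuousAt]
    intro x
    have hsub : Filter.Tendsto (fun y : Euc d => y - x) (nhds x) (nhds 0) := by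
      simpa using (continuous_sub_right x).tendsto x
    have hsub' : Filter.Tendsto (fun y : Euc d => x - y) (nhds x) (nhds 0) := by
      simpa using (continuous_sub_left x).tendsto x
    have h1 : Filter.Tendsto (fun y => ψ x + gauge D (y - x)) (nhds x) (nhds (ψ x)) := by
      have := (hgc.tendsto 0).comp hsub
      rw [gauge_zero] at this
      simpa using Filter.Tendsto.add (tendsto_const_nhds (x := ψ x)) this
    have h2 : Filter.Tendsto (fun y => ψ x - gauge D (x - y)) (nhds x) (nhds (ψ x)) := by
      have := (hgc.tendsto 0).comp hsub'
      rw [gauge_zero] at this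
      simpa using Filter.Tendsto.sub (tendsto_const_nhds (x := ψ x)) this
    exact tendsto_of_tendsto_of_tendsto_of_le_of_le h2 h1
      (fun y => by have := hψLip y x; linarith) (fun y => by have := hψLip x y; linarith)
  set T : Euc d → Euc d × ℝ := fun x => (x, ψ x) with hT
  have hTm : Measurable T := measurable_id.prodMk hψc.measurable
  have hTTm : Measurable (Prod.map T T) := hTm.prodMap hTm
  have hprojm : Measurable (fun q : (Euc d × ℝ) × (Euc d × ℝ) => (q.1.1, q.2.1)) :=
    (measurable_fst.fst).prodMk (measurable_snd.fst)
  set S : Set (Euc d × Euc d) := {p | ψ p.2 - ψ p.1 = gauge D (p.2 - p.1)} with hSdef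
  have hSm : MeasurableSet S := by
    apply (isClosed_eq ?_ ?_).measurableSet
    · exact (hψc.comp continuous_snd).sub (hψc.comp continuous_fst)
    · exact hgc.comp (continuous_snd.sub continuous_fst)
  set A : Set ((Euc d × ℝ) × (Euc d × ℝ)) :=
    {q | gauge D (q.2.1 - q.1.1) ≤ q.2.2 - q.1.2} with hAdef
  have hAm : MeasurableSet A := by
    apply (isClosed_le ?_ ?_).measurableSet
    · exact hgc.comp ((continuous_fst.comp continuous_snd).sub (continuous_fst.comp continuous_fst))
    · exact (continuous_snd.comp continuous_snd).sub (continuous_snd.comp continuous_fst)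
  have hπprob : IsProbabilityMeasure π := by
    constructor
    have : π.map Prod.fst Set.univ = 1 := by rw [hπ.1]; simp
    rwa [Measure.map_apply measurable_fst MeasurableSet.univ, Set.preimage_univ] at this
  -- preimage of A under T×T is S
  have hTTA : Prod.map T T ⁻¹' A = S := by
    ext p
    simp only [hAdef, hSdef, Set.mem_preimage, Set.mem_setOf_eq, Prod.map_apply, hT]
    constructor
    · intro h; exact le_antisymm (hψLip p.1 p.2) h
    · intro h; exact h.ge
  -- cost of the lifted plan
  have hcost : ∫⁻ q, epiCost D q ∂(π.map (Prod.map T T)) = ⊤ * π Sᶜ := by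
    rw [epiCost_lintegral D hDcv hD0, Measure.map_apply hTTm hAm.compl,
      Set.preimage_compl, hTTA]
  -- the lifted plan is always a coupling
  have hcoupT : IsCoupling (π.map (Prod.map T T)) (μ.map T) (ν.map T) := by
    constructor
    · rw [Measure.map_map measurable_fst hTTm, show Prod.fst ∘ Prod.map T T = T ∘ Prod.fst from rfl,
        ← Measure.map_map hTm measurable_fst, hπ.1]
    · rw [Measure.map_map measurable_snd hTTm, show Prod.snd ∘ Prod.map T T = T ∘ Prod.snd from rfl,
        ← Measure.map_map hTm measurable_snd, hπ.2]
  have hSone : IsOptimalCoupling (normCost D) π μ ν ↔ π S = 1 := hψpot π hπ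
  have hScompl : π Sᶜ = 0 ↔ π S = 1 := prob_compl_eq_zero_iff hSm
  -- graph set
  set G : Set (Euc d × ℝ) := {z | z.2 = ψ z.1} with hGdef
  have hGm : MeasurableSet G :=
    (isClosed_eq continuous_snd (hψc.comp continuous_fst)).measurableSet
  have hμG : (μ.map T) Gᶜ = 0 := by
    rw [Measure.map_apply hTm hGm.compl]
    have he : T ⁻¹' Gᶜ = ∅ := by ext x; simp [hGdef, hT]
    rw [he]; exact measure_empty
  have hνG : (ν.map T) Gᶜ = 0 := by
    rw [Measure.map_apply hTm hGm.compl]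
    have he : T ⁻¹' Gᶜ = ∅ := by ext x; simp [hGdef, hT]
    rw [he]; exact measure_empty
  refine ⟨?_, ?_, ?_⟩
  · -- (1) ↔ (2)
    rw [hSone]
    constructor
    · intro h
      refine ⟨hcoupT, ?_⟩
      rw [hcost, hScompl.mpr h]
      simp
    · rintro ⟨-, h⟩
      rw [hcost] at h
      have : π Sᶜ = 0 := by
        by_contra h0
        rw [ENNReal.top_mul h0] at h
        exact h rfl
      exact hScompl.mp this
  · -- (1) ↔ (3)
    constructor
    · intro h
      refine ⟨π.map (Prod.map T T), hcoupT, ?_, ?_⟩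
      · rw [hcost, hScompl.mpr ((hSone.mp h)), mul_zero]
        exact ENNReal.zero_ne_top
      · rw [Measure.map_map hprojm hTTm]
        have : (fun q : (Euc d × ℝ) × (Euc d × ℝ) => (q.1.1, q.2.1)) ∘ Prod.map T T = id := rfl
        rw [this, Measure.map_id]
    · rintro ⟨πh, hcoup, hfin', hproj⟩
      rw [hSone, ← hScompl]
      -- πh gives full measure to A
      have hAc : πh Aᶜ = 0 := by
        rw [epiCost_lintegral D hDcv hD0] at hfin'
        by_contra h0
        rw [ENNReal.top_mul h0] at hfin'
        exact hfin' rfl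
      -- πh-a.e. both coordinates lie on the graph of ψ
      have h1G : πh (Prod.fst ⁻¹' Gᶜ) = 0 := by
        rw [← Measure.map_apply measurable_fst hGm.compl, hcoup.1]; exact hμG
      have h2G : πh (Prod.snd ⁻¹' Gᶜ) = 0 := by
        rw [← Measure.map_apply measurable_snd hGm.compl, hcoup.2]; exact hνG
      have hsubset : (fun q : (Euc d × ℝ) × (Euc d × ℝ) => (q.1.1, q.2.1)) ⁻¹' Sᶜ ⊆
          (Prod.fst ⁻¹' Gᶜ) ∪ (Prod.snd ⁻¹' Gᶜ) ∪ Aᶜ := by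
        intro q hq
        by_contra hmem
        simp only [Set.mem_union, not_or, Set.mem_preimage, Set.mem_compl_iff,
          hGdef, hAdef, Set.mem_setOf_eq, not_not] at hmem
        obtain ⟨⟨hg1, hg2⟩, hga⟩ := hmem
        apply hq
        simp only [Set.mem_preimage, Set.mem_compl_iff, hSdef, Set.mem_setOf_eq, not_not]
        exact le_antisymm (hψLip q.1.1 q.2.1) (by rw [hg1, hg2] at hga; exact hga)
      have : π Sᶜ = πh ((fun q : (Euc d × ℝ) × (Euc d × ℝ) => (q.1.1, q.2.1)) ⁻¹' Sᶜ) := by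
        rw [hproj, Measure.map_apply hprojm hSm.compl]
      rw [this]
      refine le_antisymm (le_trans (measure_mono hsubset) ?_) zero_le
      refine le_trans (measure_union_le _ _) ?_
      rw [hAc, add_zero]
      refine le_trans (measure_union_le _ _) ?_
      rw [h1G, h2G, add_zero]
  · -- (1) ↔ (4)
    rw [hSone]
    have hsetm : MeasurableSet {q : (Euc d × ℝ) × (Euc d × ℝ) |
        q.1.2 = ψ q.1.1 ∧ q.2.2 = ψ q.2.1 ∧ ψ q.2.1 - ψ q.1.1 = gauge D (q.2.1 - q.1.1)} := by
      refine MeasurableSet.inter ?_ (MeasurableSet.inter ?_ ?_)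
      · exact (isClosed_eq (continuous_snd.comp continuous_fst)
          (hψc.comp (continuous_fst.comp continuous_fst))).measurableSet
      · exact (isClosed_eq (continuous_snd.comp continuous_snd)
          (hψc.comp (continuous_fst.comp continuous_snd))).measurableSet
      · exact (isClosed_eq ((hψc.comp (continuous_fst.comp continuous_snd)).sub
          (hψc.comp (continuous_fst.comp continuous_fst)))
          (hgc.comp ((continuous_fst.comp continuous_snd).sub
            (continuous_fst.comp continuous_fst)))).measurableSet
    rw [Measure.map_apply hTTm hsetm]
    have : Prod.map T T ⁻¹' {q : (Euc d × ℝ) × (Euc d × ℝ) |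
        q.1.2 = ψ q.1.1 ∧ q.2.2 = ψ q.2.1 ∧ ψ q.2.1 - ψ q.1.1 = gauge D (q.2.1 - q.1.1)} = S := by
      ext p
      simp [hSdef, hT]
    rw [this]
end
end

section
/- Let C ⊆ ℝ^k be a closed convex cone equal to the epigraph in ℝ^{k−1} × ℝ of the Minkowski gauge of a compact convex subset of ℝ^{k−1} with 0 in its interior. Let w, w' ∈ ℝ^k with w' − w ∈ C \ {0}, and let F be the extremal cone of C with w' − w in the relative interior of F (the minimal extremal cone of C containing w' − w). Then the set O(w,w') := (w + C) ∩ (w' − C) is the convex set (w + F) ∩ (w' − F); there exists δ > 0 such that B(w,δ) ∩ (w + F) ⊆ O(w,w') and B(w',δ) ∩ (w' − F) ⊆ O(w,w'); and the cone generated by O(w,w') − w and the cone generated by w' − O(w,w') both equal F. -/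
open Set Metric

noncomputable section

lemma intrinsic_ball {E : Type*} [NormedAddCommGroup E] [NormedSpace ℝ E]
    {F : Set E} {x : E} (hx : x ∈ intrinsicInterior ℝ F) :
    ∃ ε > 0, ∀ z ∈ affineSpan ℝ F, dist z x < ε → z ∈ F := by
  rw [intrinsicInterior] at hx
  obtain ⟨y, hy, rfl⟩ := hx
  obtain ⟨ε, hε, hball⟩ := Metric.mem_nhds_iff.1 (mem_interior_iff_mem_nhds.1 hy)
  refine ⟨ε, hε, fun z hz hd => ?_⟩
  have hmem : (⟨z, hz⟩ : affineSpan ℝ F) ∈ Metric.ball y ε := by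
    simpa [Metric.mem_ball, Subtype.dist_eq] using hd
  exact hball hmem

/-- **Structure of the set `O(w,w') = (w + C) ∩ (w' − C)`**
(Proposition 4.10 of Bianchini–Daneri). -/
theorem statement_7 {m : ℕ} (D' : Set (Euc m))
    (hcp : IsCompact D') (hcv : Convex ℝ D') (h0 : (0 : Euc m) ∈ interior D')
    (C : Set (Euc m × ℝ)) (hC : C = {p : Euc m × ℝ | gauge D' p.1 ≤ p.2})
    (w w' : Euc m × ℝ) (hww' : w' - w ∈ C) (hne : w' - w ≠ 0)
    (F : Set (Euc m × ℝ)) (hFconv : Convex ℝ F) (hFext : IsExtreme ℝ C F)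
    (hFmin : w' - w ∈ intrinsicInterior ℝ F) :
    {z | z - w ∈ C ∧ w' - z ∈ C} = {z | z - w ∈ F ∧ w' - z ∈ F} ∧
    (∃ δ : ℝ, 0 < δ ∧
      ball w δ ∩ {z | z - w ∈ F} ⊆ {z | z - w ∈ C ∧ w' - z ∈ C} ∧
      ball w' δ ∩ {z | w' - z ∈ F} ⊆ {z | z - w ∈ C ∧ w' - z ∈ C}) ∧
    {v | ∃ t : ℝ, 0 < t ∧ ∃ z, (z - w ∈ C ∧ w' - z ∈ C) ∧ v = t • (z - w)} = F ∧
    {v | ∃ t : ℝ, 0 < t ∧ ∃ z, (z - w ∈ C ∧ w' - z ∈ C) ∧ v = t • (w' - z)} = F := by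
  have hC0 : (0 : Euc m × ℝ) ∈ C := by
    rw [hC]; simp [gauge_zero]
  have hCs : ∀ t : ℝ, 0 ≤ t → ∀ p ∈ C, t • p ∈ C := by
    rw [hC]
    intro t ht p hp
    simp only [mem_setOf_eq] at hp ⊢
    rw [Prod.smul_fst, Prod.smul_snd, gauge_smul_of_nonneg ht, smul_eq_mul, smul_eq_mul]
    exact mul_le_mul_of_nonneg_left hp ht
  have hww'F : w' - w ∈ F := intrinsicInterior_subset hFmin
  have hF0 : (0 : Euc m × ℝ) ∈ F := by
    have hseg : w' - w ∈ openSegment ℝ (0 : Euc m × ℝ) ((2:ℝ) • (w' - w)) :=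
      ⟨1/2, 1/2, by norm_num, by norm_num, by norm_num, by module⟩
    exact hFext.2 hC0 (hCs 2 (by norm_num) _ hww') hww'F hseg
  have hFs : ∀ t : ℝ, 0 < t → ∀ v ∈ F, t • v ∈ F := by
    intro t ht v hv
    rcases le_or_gt t 1 with h1 | h1
    · have := hFconv hv hF0 ht.le (by linarith : (0:ℝ) ≤ 1 - t) (by ring)
      simpa using this
    · have htv : t • v ∈ C := hCs t ht.le v (hFext.1 hv)
      have hseg : v ∈ openSegment ℝ (0 : Euc m × ℝ) (t • v) := by
        refine ⟨1 - 1/t, 1/t, by rw [sub_pos]; exact (div_lt_one ht).2 h1, by positivity,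
          by ring, ?_⟩
        rw [smul_zero, zero_add, smul_smul, one_div, inv_mul_cancel₀ ht.ne', one_smul]
      exact hFext.right_mem_of_mem_openSegment hC0 htv hv hseg
  obtain ⟨ε, hε, hkey⟩ := intrinsic_ball hFmin
  have key : ∀ v ∈ F, ‖v‖ < ε → (w' - w) - v ∈ F := by
    intro v hv hn
    have hmem : (w' - w) - v ∈ affineSpan ℝ F := by
      have h1 := AffineSubspace.smul_vsub_vadd_mem (affineSpan ℝ F) (-1 : ℝ)
        (subset_affineSpan ℝ F hv) (subset_affineSpan ℝ F hF0) (subset_affineSpan ℝ F hww'F)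
      have h2 : (-1 : ℝ) • (v -ᵥ (0 : Euc m × ℝ)) +ᵥ (w' - w) = (w' - w) - v := by
        simp only [vsub_eq_sub, vadd_eq_add, sub_zero]
        module
      rwa [h2] at h1
    apply hkey _ hmem
    rw [dist_eq_norm]
    have h3 : (w' - w) - v - (w' - w) = -v := by abel
    rw [h3, norm_neg]
    exact hn
  have hO : ∀ z : Euc m × ℝ, z - w ∈ C → w' - z ∈ C → z - w ∈ F ∧ w' - z ∈ F := by
    intro z h1 h2
    have hseg : w' - w ∈ openSegment ℝ ((2:ℝ) • (z - w)) ((2:ℝ) • (w' - z)) :=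
      ⟨1/2, 1/2, by norm_num, by norm_num, by norm_num, by module⟩
    have hext := And.intro (hFext.2 (hCs 2 (by norm_num) _ h1) (hCs 2 (by norm_num) _ h2) hww'F hseg)
      (hFext.right_mem_of_mem_openSegment (hCs 2 (by norm_num) _ h1) (hCs 2 (by norm_num) _ h2) hww'F hseg)
    constructor
    · have := hFs (1/2) (by norm_num) _ hext.1
      rwa [smul_smul, show (1/2 : ℝ) * 2 = 1 by norm_num, one_smul] at this
    · have := hFs (1/2) (by norm_num) _ hext.2
      rwa [smul_smul, show (1/2 : ℝ) * 2 = 1 by norm_num, one_smul] at this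
  refine ⟨?_, ?_, ?_, ?_⟩
  · ext z
    simp only [mem_setOf_eq]
    exact ⟨fun ⟨h1, h2⟩ => hO z h1 h2, fun ⟨h1, h2⟩ => ⟨hFext.1 h1, hFext.1 h2⟩⟩
  · refine ⟨ε, hε, ?_, ?_⟩
    · rintro z ⟨hz, hzF⟩
      refine ⟨hFext.1 hzF, ?_⟩
      have h1 : (w' - w) - (z - w) ∈ F := by
        refine key _ hzF ?_
        rw [← dist_eq_norm]; exact mem_ball.1 hz
      have h2 : w' - z = (w' - w) - (z - w) := by abel
      rw [h2]; exact hFext.1 h1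
    · rintro z ⟨hz, hzF⟩
      refine ⟨?_, hFext.1 hzF⟩
      have h1 : (w' - w) - (w' - z) ∈ F := by
        refine key _ hzF ?_
        rw [← dist_eq_norm, dist_comm]; exact mem_ball.1 hz
      have h2 : z - w = (w' - w) - (w' - z) := by abel
      rw [h2]; exact hFext.1 h1
  · ext v
    simp only [mem_setOf_eq]
    constructor
    · rintro ⟨t, ht, z, ⟨h1, h2⟩, rfl⟩
      exact hFs t ht _ (hO z h1 h2).1
    · intro hv
      set s : ℝ := ε / (‖v‖ + 1) with hs
      have hspos : 0 < s := div_pos hε (by positivity)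
      have hsnorm : ‖s • v‖ < ε := by
        rw [norm_smul, Real.norm_eq_abs, abs_of_pos hspos, hs, div_mul_eq_mul_div,
          div_lt_iff₀ (by positivity)]
        nlinarith [norm_nonneg v, hε]
      have hsF : s • v ∈ F := hFs s hspos v hv
      have hsF2 : (w' - w) - s • v ∈ F := key _ hsF hsnorm
      refine ⟨s⁻¹, inv_pos.2 hspos, w + s • v, ⟨?_, ?_⟩, ?_⟩
      · rw [add_sub_cancel_left]; exact hFext.1 hsF
      · have h2 : w' - (w + s • v) = (w' - w) - s • v := by abel
        rw [h2]; exact hFext.1 hsF2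
      · rw [add_sub_cancel_left, smul_smul, inv_mul_cancel₀ hspos.ne', one_smul]
  · ext v
    simp only [mem_setOf_eq]
    constructor
    · rintro ⟨t, ht, z, ⟨h1, h2⟩, rfl⟩
      exact hFs t ht _ (hO z h1 h2).2
    · intro hv
      set s : ℝ := ε / (‖v‖ + 1) with hs
      have hspos : 0 < s := div_pos hε (by positivity)
      have hsnorm : ‖s • v‖ < ε := by
        rw [norm_smul, Real.norm_eq_abs, abs_of_pos hspos, hs, div_mul_eq_mul_div,
          div_lt_iff₀ (by positivity)]
        nlinarith [norm_nonneg v, hε]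
      have hsF : s • v ∈ F := hFs s hspos v hv
      have hsF2 : (w' - w) - s • v ∈ F := key _ hsF hsnorm
      refine ⟨s⁻¹, inv_pos.2 hspos, w' - s • v, ⟨?_, ?_⟩, ?_⟩
      · have h2 : w' - s • v - w = (w' - w) - s • v := by abel
        rw [h2]; exact hFext.1 hsF2
      · have h2 : w' - (w' - s • v) = s • v := by abel
        rw [h2]; exact hFext.1 hsF
      · have h2 : w' - (w' - s • v) = s • v := by abel
        rw [h2, smul_smul, inv_mul_cancel₀ hspos.ne', one_smul]
end
end

section
/- Let C ⊆ ℝ^k = ℝ^{k−1} × ℝ be the epigraph of the Minkowski gauge N of a compact convex subset of ℝ^{k−1} with 0 in its interior, and let {θ⁻¹(t)}_{t∈T} be a c_C-Lipschitz foliation which is non-degenerate: every nonempty class K = {θ = t} contains points w, w' ∈ K such that int(w + C) ∩ K = ∅ and int(w' − C) ∩ K = ∅. Then there exist Borel functions h⁻, h⁺ defined on {(t,x) : x ∈ p_{ℝ^{k−1}}({θ = t})} such that: (1) for each t, x ↦ h⁻(t,x) and x ↦ h⁺(t,x) are N-Lipschitz, i.e. h^±(t,x') − h^±(t,x) ≤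 N(x' − x); (2) every (x,y) in the closure of {θ = t} with x ∈ p_{ℝ^{k−1}}({θ = t}) satisfies h⁻(t,x) ≤ y ≤ h⁺(t,x); (3) the interior of {θ = t} in ℝ^k equals {(x,y) : x ∈ p_{ℝ^{k−1}}({θ = t}), h⁻(t,x) < y < h⁺(t,x)}. In particular the following are equivalent: {θ = t} has empty interior; h⁻(t,·) = h⁺(t,·) on p_{ℝ^{k−1}}({θ = t}); {θ = t} is a complete c_C-Lipschitz graph; {θ = t} coincides with the graph of h^±(t,·) over p_{ℝ^{k−1}}({θ = t}). -/
open Set Metric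

noncomputable section

/-- The ambient space `ℝ^k = ℝ^{k-1} × ℝ` (here `k = m + 1`). -/
abbrev Wsp (m : ℕ) : Type := Euc m × ℝ

/-- The epigraph of the Minkowski gauge of `D'`, a closed non-degenerate convex cone. -/
def epiCone {m : ℕ} (D' : Set (Euc m)) : Set (Wsp m) := {p | gauge D' p.1 ≤ p.2}

/-- The cone (with positive coefficients) generated by `A`. -/
def coneGen {m : ℕ} (A : Set (Wsp m)) : Set (Wsp m) :=
  {x | ∃ t : ℝ, 0 < t ∧ ∃ a ∈ A, x = t • a}

/-- The unit sphere `S^{k-1}`. -/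
def sphereW (m : ℕ) : Set (Wsp m) := {v | ‖v‖ = 1}

/-- The spherical convex envelope `conv_S A = S^{k-1} ∩ ℝ⁺·conv A`. -/
def convSph {m : ℕ} (A : Set (Wsp m)) : Set (Wsp m) :=
  sphereW m ∩ coneGen (convexHull ℝ A)

/-- The cone `{0} ∪ ℝ⁺·conv A` generated by a set of directions `A`. -/
def coneOf {m : ℕ} (A : Set (Wsp m)) : Set (Wsp m) :=
  {0} ∪ coneGen (convexHull ℝ A)

/-- `G` is a `c_C`-Lipschitz graph. -/
def IsLipGraph {m : ℕ} (C G : Set (Wsp m)) : Prop :=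
  ∀ w ∈ G, ∀ w' ∈ G, w' - w ∈ C → w' - w ∈ frontier C

/-- `G` is a complete `c_C`-Lipschitz graph. -/
def IsCompleteLipGraph {m : ℕ} (C G : Set (Wsp m)) : Prop :=
  IsLipGraph C G ∧ ∀ w ∈ G, ∀ w' ∈ G, ∀ z, z - w ∈ C → w' - z ∈ C → z ∈ G

section Aux
variable {m : ℕ} {D' : Set (Euc m)}

lemma aux_absorbent (h0 : (0 : Euc m) ∈ interior D') : Absorbent ℝ D' :=
  absorbent_nhds_zero (mem_interior_iff_mem_nhds.mp h0)

lemma aux_gauge_cont (hcv : Convex ℝ D') (h0 : (0 : Euc m) ∈ interior D') :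
    Continuous (gauge D') :=
  continuous_gauge hcv (mem_interior_iff_mem_nhds.mp h0)

lemma aux_tri (hcv : Convex ℝ D') (h0 : (0 : Euc m) ∈ interior D') (a b c : Euc m) :
    gauge D' (a - c) ≤ gauge D' (a - b) + gauge D' (b - c) := by
  have := gauge_add_le hcv (aux_absorbent h0) (a - b) (b - c)
  simpa [sub_add_sub_cancel] using this

lemma aux_isClosed_epiCone (hcv : Convex ℝ D') (h0 : (0 : Euc m) ∈ interior D') :
    IsClosed (epiCone D') :=
  isClosed_le ((aux_gauge_cont hcv h0).comp continuous_fst) continuous_snd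

lemma aux_interior_epiCone (hcv : Convex ℝ D') (h0 : (0 : Euc m) ∈ interior D') :
    interior (epiCone D') = {p : Wsp m | gauge D' p.1 < p.2} := by
  apply Subset.antisymm
  · intro p hp
    rw [mem_interior_iff_mem_nhds, Metric.mem_nhds_iff] at hp
    obtain ⟨ε, hε, hball⟩ := hp
    have hq : (p.1, p.2 - ε/2) ∈ epiCone D' := by
      apply hball
      have h2 : dist (p.2 - ε/2) p.2 = ε/2 := by
        rw [Real.dist_eq, show p.2 - ε/2 - p.2 = -(ε/2) by ring, abs_neg,
          abs_of_nonneg (by linarith)]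
      rw [Metric.mem_ball, Prod.dist_eq]
      simp only [dist_self, h2]
      exact max_lt hε (by linarith)
    have hq' : gauge D' p.1 ≤ p.2 - ε/2 := hq
    show gauge D' p.1 < p.2
    linarith
  · apply interior_maximal
    · intro p hp
      have h : gauge D' p.1 < p.2 := hp
      exact h.le
    · exact isOpen_lt ((aux_gauge_cont hcv h0).comp continuous_fst) continuous_snd

lemma aux_int_sub_right (hcv : Convex ℝ D') (h0 : (0 : Euc m) ∈ interior D') (w : Wsp m) :
    interior {z : Wsp m | z - w ∈ epiCone D'}
      = {z : Wsp m | gauge D' (z.1 - w.1) < z.2 - w.2} := by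
  have h1 : {z : Wsp m | z - w ∈ epiCone D'} = (Homeomorph.subRight w) ⁻¹' (epiCone D') := rfl
  rw [h1, ← Homeomorph.preimage_interior, aux_interior_epiCone hcv h0]
  rfl

lemma aux_int_sub_left (hcv : Convex ℝ D') (h0 : (0 : Euc m) ∈ interior D') (w : Wsp m) :
    interior {z : Wsp m | w - z ∈ epiCone D'}
      = {z : Wsp m | gauge D' (w.1 - z.1) < w.2 - z.2} := by
  have h1 : {z : Wsp m | w - z ∈ epiCone D'} = (Homeomorph.subLeft w) ⁻¹' (epiCone D') := rfl
  rw [h1, ← Homeomorph.preimage_interior, aux_interior_epiCone hcv h0]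
  rfl

end Aux

section Top

lemma aux_sigmaCompact_measurableSet {X : Type*} [TopologicalSpace X] [T2Space X]
    [MeasurableSpace X] [OpensMeasurableSpace X] {s : Set X} (h : IsSigmaCompact s) :
    MeasurableSet s := by
  obtain ⟨K, hK, rfl⟩ := h
  exact MeasurableSet.iUnion fun n => (hK n).measurableSet

lemma aux_isSigmaCompact_of_isOpen {X : Type*} [TopologicalSpace X] [T2Space X]
    [LocallyCompactSpace X] [SecondCountableTopology X] {U : Set X} (hU : IsOpen U) :
    IsSigmaCompact U := by
  rw [isSigmaCompact_iff_sigmaCompactSpace]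
  haveI := hU.locallyCompactSpace
  infer_instance

lemma aux_proj_measurable {m : ℕ} {T : Type*} [TopologicalSpace T] [PolishSpace T]
    [MeasurableSpace T] [BorelSpace T]
    {E : Set (Wsp m × T)} (hE : IsSigmaCompact E) {O : Set (Wsp m × Euc m)} (hO : IsOpen O) :
    MeasurableSet {q : T × Euc m | ∃ w : Wsp m, (w, q.1) ∈ E ∧ (w, q.2) ∈ O} := by
  obtain ⟨K, hK, rfl⟩ := hE
  obtain ⟨C, hC, hCO⟩ := aux_isSigmaCompact_of_isOpen hO
  subst hCO
  have heq : {q : T × Euc m | ∃ w, (w, q.1) ∈ ⋃ n, K n ∧ (w, q.2) ∈ ⋃ j, C j}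
      = ⋃ n, ⋃ j, (fun pc : (Wsp m × T) × (Wsp m × Euc m) => (pc.1.2, pc.2.2)) ''
          ((K n ×ˢ C j) ∩ {pc | pc.1.1 = pc.2.1}) := by
    ext q
    simp only [mem_iUnion, mem_image, mem_inter_iff, mem_prod, mem_setOf_eq]
    constructor
    · rintro ⟨w, ⟨n, hn⟩, ⟨j, hj⟩⟩
      exact ⟨n, j, ((w, q.1), (w, q.2)), ⟨⟨hn, hj⟩, rfl⟩, rfl⟩
    · rintro ⟨n, j, pc, ⟨⟨h1, h2⟩, h3⟩, h4⟩
      refine ⟨pc.1.1, ⟨n, ?_⟩, ⟨j, ?_⟩⟩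
      · have hq1 : (pc.1.1, q.1) = pc.1 := by rw [← h4]
        rw [hq1]; exact h1
      · have hq2 : (pc.1.1, q.2) = pc.2 := by rw [h3, ← h4]
        rw [hq2]; exact h2
  rw [heq]
  refine MeasurableSet.iUnion fun n => MeasurableSet.iUnion fun j => ?_
  have hcomp : IsCompact ((K n ×ˢ C j) ∩ {pc : (Wsp m × T) × (Wsp m × Euc m) | pc.1.1 = pc.2.1}) :=
    ((hK n).prod (hC j)).inter_right
      (isClosed_eq (continuous_fst.comp continuous_fst) (continuous_fst.comp continuous_snd))
  exact (hcomp.image ((continuous_snd.comp continuous_fst).prodMk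
    (continuous_snd.comp continuous_snd))).measurableSet

end Top

/-- **Characterization of the classes of a non-degenerate cone-Lipschitz foliation as
regions between two cone-Lipschitz graphs** (Proposition 4.17 of Bianchini–Daneri). -/
theorem statement_9 {m : ℕ} (D' : Set (Euc m))
    (hcp : IsCompact D') (hcv : Convex ℝ D') (h0 : (0 : Euc m) ∈ interior D')
    {T : Type*} [TopologicalSpace T] [PolishSpace T] [MeasurableSpace T] [BorelSpace T]
    (dom : Set (Wsp m)) (θ : Wsp m → T)
    (hgraph : IsSigmaCompact {p : Wsp m × T | p.1 ∈ dom ∧ p.2 = θ p.1})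
    (hcomplete : ∀ w ∈ dom, ∀ w' ∈ dom, θ w = θ w' →
      ∀ z, z - w ∈ epiCone D' → w' - z ∈ epiCone D' → z ∈ dom ∧ θ z = θ w)
    (hnondeg : ∀ t : T, {w ∈ dom | θ w = t}.Nonempty →
      ∃ w ∈ {w ∈ dom | θ w = t}, ∃ w' ∈ {w ∈ dom | θ w = t},
        interior {z | z - w ∈ epiCone D'} ∩ {z ∈ dom | θ z = t} = ∅ ∧
        interior {z | w' - z ∈ epiCone D'} ∩ {z ∈ dom | θ z = t} = ∅) :
    ∃ hminus hplus : T × Euc m → ℝ,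
      Measurable hminus ∧ Measurable hplus ∧
      (∀ t : T, ∀ x ∈ Prod.fst '' {w ∈ dom | θ w = t}, ∀ x' ∈ Prod.fst '' {w ∈ dom | θ w = t},
        hplus (t, x') - hplus (t, x) ≤ gauge D' (x' - x) ∧
        hminus (t, x') - hminus (t, x) ≤ gauge D' (x' - x)) ∧
      (∀ t : T, ∀ p ∈ closure {w ∈ dom | θ w = t}, p.1 ∈ Prod.fst '' {w ∈ dom | θ w = t} →
        hminus (t, p.1) ≤ p.2 ∧ p.2 ≤ hplus (t, p.1)) ∧
      (∀ t : T, interior {w ∈ dom | θ w = t} =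
        {p : Wsp m | p.1 ∈ Prod.fst '' {w ∈ dom | θ w = t} ∧
          hminus (t, p.1) < p.2 ∧ p.2 < hplus (t, p.1)}) ∧
      (∀ t : T, {w ∈ dom | θ w = t}.Nonempty →
        ((interior {w ∈ dom | θ w = t} = ∅ ↔
            ∀ x ∈ Prod.fst '' {w ∈ dom | θ w = t}, hminus (t, x) = hplus (t, x)) ∧
         (interior {w ∈ dom | θ w = t} = ∅ ↔
            IsCompleteLipGraph (epiCone D') {w ∈ dom | θ w = t}) ∧
         (interior {w ∈ dom | θ w = t} = ∅ ↔
            {w ∈ dom | θ w = t} =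
              {p : Wsp m | p.1 ∈ Prod.fst '' {w ∈ dom | θ w = t} ∧ p.2 = hplus (t, p.1)}))) := by
  classical
  have gcont : Continuous (gauge D') := aux_gauge_cont hcv h0
  have tri : ∀ a b c : Euc m, gauge D' (a - c) ≤ gauge D' (a - b) + gauge D' (b - c) :=
    aux_tri hcv h0
  -- maximal / minimal points from nondegeneracy
  have hmax : ∀ t : T, {w ∈ dom | θ w = t}.Nonempty →
      ∃ w ∈ {w ∈ dom | θ w = t}, ∀ z ∈ {w ∈ dom | θ w = t},
        z.2 - w.2 ≤ gauge D' (z.1 - w.1) := by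
    intro t ht
    obtain ⟨w, hw, w', hw', hW, hW'⟩ := hnondeg t ht
    refine ⟨w, hw, fun z hz => ?_⟩
    by_contra hlt
    push_neg at hlt
    have hzmem : z ∈ interior {z : Wsp m | z - w ∈ epiCone D'} := by
      rw [aux_int_sub_right hcv h0]
      exact hlt
    exact absurd (hW ▸ mem_inter hzmem hz) (notMem_empty z)
  have hmin : ∀ t : T, {w ∈ dom | θ w = t}.Nonempty →
      ∃ w ∈ {w ∈ dom | θ w = t}, ∀ z ∈ {w ∈ dom | θ w = t},
        w.2 - z.2 ≤ gauge D' (w.1 - z.1) := by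
    intro t ht
    obtain ⟨w, hw, w', hw', hW, hW'⟩ := hnondeg t ht
    refine ⟨w', hw', fun z hz => ?_⟩
    by_contra hlt
    push_neg at hlt
    have hzmem : z ∈ interior {z : Wsp m | w' - z ∈ epiCone D'} := by
      rw [aux_int_sub_left hcv h0]
      exact hlt
    exact absurd (hW' ▸ mem_inter hzmem hz) (notMem_empty z)
  -- boundedness
  have hbddp : ∀ (t : T) (x : Euc m),
      BddAbove ((fun w : Wsp m => w.2 - gauge D' (w.1 - x)) '' {w ∈ dom | θ w = t}) := by
    intro t x
    rcases eq_empty_or_nonempty {w ∈ dom | θ w = t} with h | h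
    · rw [h, image_empty]; exact bddAbove_empty
    · obtain ⟨w, hw, hub⟩ := hmax t h
      refine ⟨w.2 + gauge D' (x - w.1), ?_⟩
      rintro s ⟨z, hz, rfl⟩
      have h1 := hub z hz
      have h2 := tri z.1 x w.1
      show z.2 - gauge D' (z.1 - x) ≤ w.2 + gauge D' (x - w.1)
      linarith
  have hbddm : ∀ (t : T) (x : Euc m),
      BddBelow ((fun w : Wsp m => w.2 + gauge D' (x - w.1)) '' {w ∈ dom | θ w = t}) := by
    intro t x
    rcases eq_empty_or_nonempty {w ∈ dom | θ w = t} with h | h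
    · rw [h, image_empty]; exact bddBelow_empty
    · obtain ⟨w, hw, hlb⟩ := hmin t h
      refine ⟨w.2 - gauge D' (w.1 - x), ?_⟩
      rintro s ⟨z, hz, rfl⟩
      have h1 := hlb z hz
      have h2 := tri w.1 x z.1
      show w.2 - gauge D' (w.1 - x) ≤ z.2 + gauge D' (x - z.1)
      linarith
  have memp : ∀ (t : T) (x : Euc m), ∀ w ∈ {w ∈ dom | θ w = t},
      w.2 - gauge D' (w.1 - x)
        ≤ sSup ((fun w : Wsp m => w.2 - gauge D' (w.1 - x)) '' {w ∈ dom | θ w = t}) :=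
    fun t x w hw => le_csSup (hbddp t x) ⟨w, hw, rfl⟩
  have memm : ∀ (t : T) (x : Euc m), ∀ w ∈ {w ∈ dom | θ w = t},
      sInf ((fun w : Wsp m => w.2 + gauge D' (x - w.1)) '' {w ∈ dom | θ w = t})
        ≤ w.2 + gauge D' (x - w.1) :=
    fun t x w hw => csInf_le (hbddm t x) ⟨w, hw, rfl⟩
  -- strict interior points
  have hintz : ∀ t : T, ∀ w₁ ∈ {w ∈ dom | θ w = t}, ∀ w₀ ∈ {w ∈ dom | θ w = t}, ∀ z : Wsp m,
      gauge D' (z.1 - w₁.1) < z.2 - w₁.2 → gauge D' (w₀.1 - z.1) < w₀.2 - z.2 →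
      z ∈ interior {w ∈ dom | θ w = t} := by
    intro t w₁ hw₁ w₀ hw₀ z hz₁ hz₀
    have hU : IsOpen ({z : Wsp m | gauge D' (z.1 - w₁.1) < z.2 - w₁.2}
        ∩ {z : Wsp m | gauge D' (w₀.1 - z.1) < w₀.2 - z.2}) := by
      apply IsOpen.inter
      · exact isOpen_lt (gcont.comp (continuous_fst.sub continuous_const))
          (continuous_snd.sub continuous_const)
      · exact isOpen_lt (gcont.comp (continuous_const.sub continuous_fst))
          (continuous_const.sub continuous_snd)
    refine interior_maximal ?_ hU ⟨hz₁, hz₀⟩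
    rintro z' ⟨h1', h0'⟩
    have h1c : z' - w₁ ∈ epiCone D' :=
      show gauge D' (z' - w₁).1 ≤ (z' - w₁).2 from le_of_lt h1'
    have h0c : w₀ - z' ∈ epiCone D' :=
      show gauge D' (w₀ - z').1 ≤ (w₀ - z').2 from le_of_lt h0'
    obtain ⟨hzd, hzt⟩ := hcomplete w₁ hw₁.1 w₀ hw₀.1 (hw₁.2.trans hw₀.2.symm) z' h1c h0c
    exact ⟨hzd, hzt.trans hw₁.2⟩
  -- interior characterization (item 3)
  have hint : ∀ t : T, interior {w ∈ dom | θ w = t} =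
      {p : Wsp m | p.1 ∈ Prod.fst '' {w ∈ dom | θ w = t} ∧
        sInf ((fun w : Wsp m => w.2 + gauge D' (p.1 - w.1)) '' {w ∈ dom | θ w = t}) < p.2 ∧
        p.2 < sSup ((fun w : Wsp m => w.2 - gauge D' (w.1 - p.1)) '' {w ∈ dom | θ w = t})} := by
    intro t
    apply Subset.antisymm
    · intro p hp
      have hpK : p ∈ {w ∈ dom | θ w = t} := interior_subset hp
      rw [mem_interior_iff_mem_nhds, Metric.mem_nhds_iff] at hp
      obtain ⟨ε, hε, hball⟩ := hp
      have hqp : ((p.1, p.2 + ε/2) : Wsp m) ∈ {w ∈ dom | θ w = t} := by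
        apply hball
        rw [Metric.mem_ball, Prod.dist_eq]
        simp only [dist_self]
        rw [Real.dist_eq, show p.2 + ε/2 - p.2 = ε/2 by ring, abs_of_nonneg (by linarith)]
        exact max_lt hε (by linarith)
      have hqm : ((p.1, p.2 - ε/2) : Wsp m) ∈ {w ∈ dom | θ w = t} := by
        apply hball
        rw [Metric.mem_ball, Prod.dist_eq]
        simp only [dist_self]
        rw [Real.dist_eq, show p.2 - ε/2 - p.2 = -(ε/2) by ring, abs_neg,
          abs_of_nonneg (by linarith)]
        exact max_lt hε (by linarith)
      refine ⟨⟨p, hpK, rfl⟩, ?_, ?_⟩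
      · have h := memm t p.1 _ hqm
        simp only [sub_self, gauge_zero, add_zero] at h
        exact lt_of_le_of_lt h (by linarith)
      · have h := memp t p.1 _ hqp
        simp only [sub_self, gauge_zero, sub_zero] at h
        exact lt_of_lt_of_le (by linarith) h
    · rintro p ⟨⟨w₂, hw₂, hw₂eq⟩, hlt1, hlt2⟩
      have hne : {w ∈ dom | θ w = t}.Nonempty := ⟨w₂, hw₂⟩
      obtain ⟨b₀, hb₀mem, hb₀⟩ := exists_lt_of_lt_csSup (hne.image _) hlt2
      obtain ⟨w₀, hw₀, rfl⟩ := hb₀mem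
      obtain ⟨b₁, hb₁mem, hb₁⟩ := exists_lt_of_csInf_lt (hne.image _) hlt1
      obtain ⟨w₁, hw₁, rfl⟩ := hb₁mem
      exact hintz t w₁ hw₁ w₀ hw₀ p (by dsimp only at hb₁ ⊢; linarith)
        (by dsimp only at hb₀ ⊢; linarith)
  have hTiff : ∀ t : T, t ∈ Prod.snd '' {p : Wsp m × T | p.1 ∈ dom ∧ p.2 = θ p.1}
      ↔ {w ∈ dom | θ w = t}.Nonempty := by
    intro t
    constructor
    · rintro ⟨p, ⟨hd, hp⟩, rfl⟩
      exact ⟨p.1, hd, hp.symm⟩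
    · rintro ⟨w, hw, hθ⟩
      exact ⟨(w, t), ⟨hw, hθ.symm⟩, rfl⟩
  have hTmeas : MeasurableSet (Prod.snd '' {p : Wsp m × T | p.1 ∈ dom ∧ p.2 = θ p.1}) :=
    aux_sigmaCompact_measurableSet (hgraph.image continuous_snd)
  refine ⟨fun q => sInf ((fun w : Wsp m => w.2 + gauge D' (q.2 - w.1)) '' {w ∈ dom | θ w = q.1}),
          fun q => sSup ((fun w : Wsp m => w.2 - gauge D' (w.1 - q.2)) '' {w ∈ dom | θ w = q.1}),
          ?_, ?_, ?_, ?_, ?_, ?_⟩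
  · -- measurability of hminus
    apply measurable_of_Iio
    intro a
    have key : (fun q : T × Euc m => sInf ((fun w : Wsp m => w.2 + gauge D' (q.2 - w.1)) ''
          {w ∈ dom | θ w = q.1})) ⁻¹' Iio a
        = {q : T × Euc m | ∃ w : Wsp m, (w, q.1) ∈ {p : Wsp m × T | p.1 ∈ dom ∧ p.2 = θ p.1}
              ∧ (w, q.2) ∈ {c : Wsp m × Euc m | c.1.2 + gauge D' (c.2 - c.1.1) < a}}
          ∪ ((Prod.fst ⁻¹' (Prod.snd '' {p : Wsp m × T | p.1 ∈ dom ∧ p.2 = θ p.1}))ᶜ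
              ∩ {_q : T × Euc m | (0:ℝ) < a}) := by
      ext q
      simp only [mem_preimage, mem_Iio, mem_union, mem_inter_iff, mem_compl_iff,
        mem_setOf_eq]
      rcases eq_empty_or_nonempty {w ∈ dom | θ w = q.1} with h | h
      · rw [h, image_empty, Real.sInf_empty]
        have hni : ¬ q.1 ∈ Prod.snd '' {p : Wsp m × T | p.1 ∈ dom ∧ p.2 = θ p.1} := by
          rw [hTiff q.1, h]
          exact not_nonempty_empty
        constructor
        · intro ha; exact Or.inr ⟨hni, ha⟩
        · rintro (⟨w, hwE, hwlt⟩ | ⟨-, ha⟩)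
          · exact absurd ((hTiff q.1).2 ⟨w, hwE.1, hwE.2.symm⟩) hni
          · exact ha
      · rw [csInf_lt_iff (hbddm q.1 q.2) (h.image _)]
        constructor
        · rintro ⟨b, ⟨w, hw, rfl⟩, hb⟩
          exact Or.inl ⟨w, ⟨hw.1, hw.2.symm⟩, hb⟩
        · rintro (⟨w, hwE, hwlt⟩ | ⟨hni, -⟩)
          · exact ⟨_, ⟨w, ⟨hwE.1, hwE.2.symm⟩, rfl⟩, hwlt⟩
          · exact absurd ((hTiff q.1).2 h) hni
    rw [key]
    refine MeasurableSet.union ?_ (((measurable_fst hTmeas).compl).inter ?_)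
    · refine aux_proj_measurable hgraph ?_
      exact isOpen_lt ((continuous_snd.comp continuous_fst).add
        (gcont.comp (continuous_snd.sub (continuous_fst.comp continuous_fst)))) continuous_const
    · by_cases ha : (0:ℝ) < a
      · simp only [ha, setOf_true]; exact MeasurableSet.univ
      · simp only [ha, setOf_false]; exact MeasurableSet.empty
  · -- measurability of hplus
    apply measurable_of_Ioi
    intro a
    have key : (fun q : T × Euc m => sSup ((fun w : Wsp m => w.2 - gauge D' (w.1 - q.2)) ''
          {w ∈ dom | θ w = q.1})) ⁻¹' Ioi a
        = {q : T × Euc m | ∃ w : Wsp m, (w, q.1) ∈ {p : Wsp m × T | p.1 ∈ dom ∧ p.2 = θ p.1}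
              ∧ (w, q.2) ∈ {c : Wsp m × Euc m | a < c.1.2 - gauge D' (c.1.1 - c.2)}}
          ∪ ((Prod.fst ⁻¹' (Prod.snd '' {p : Wsp m × T | p.1 ∈ dom ∧ p.2 = θ p.1}))ᶜ
              ∩ {_q : T × Euc m | a < (0:ℝ)}) := by
      ext q
      simp only [mem_preimage, mem_Ioi, mem_union, mem_inter_iff, mem_compl_iff,
        mem_setOf_eq]
      rcases eq_empty_or_nonempty {w ∈ dom | θ w = q.1} with h | h
      · rw [h, image_empty, Real.sSup_empty]
        have hni : ¬ q.1 ∈ Prod.snd '' {p : Wsp m × T | p.1 ∈ dom ∧ p.2 = θ p.1} := by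
          rw [hTiff q.1, h]
          exact not_nonempty_empty
        constructor
        · intro ha; exact Or.inr ⟨hni, ha⟩
        · rintro (⟨w, hwE, hwlt⟩ | ⟨-, ha⟩)
          · exact absurd ((hTiff q.1).2 ⟨w, hwE.1, hwE.2.symm⟩) hni
          · exact ha
      · rw [lt_csSup_iff (hbddp q.1 q.2) (h.image _)]
        constructor
        · rintro ⟨b, ⟨w, hw, rfl⟩, hb⟩
          exact Or.inl ⟨w, ⟨hw.1, hw.2.symm⟩, hb⟩
        · rintro (⟨w, hwE, hwlt⟩ | ⟨hni, -⟩)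
          · exact ⟨_, ⟨w, ⟨hwE.1, hwE.2.symm⟩, rfl⟩, hwlt⟩
          · exact absurd ((hTiff q.1).2 h) hni
    rw [key]
    refine MeasurableSet.union ?_ (((measurable_fst hTmeas).compl).inter ?_)
    · refine aux_proj_measurable hgraph ?_
      exact isOpen_lt continuous_const ((continuous_snd.comp continuous_fst).sub
        (gcont.comp ((continuous_fst.comp continuous_fst).sub continuous_snd)))
    · by_cases ha : a < (0:ℝ)
      · simp only [ha, setOf_true]; exact MeasurableSet.univ
      · simp only [ha, setOf_false]; exact MeasurableSet.empty
  · -- Lipschitz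
    rintro t x ⟨wx, hwx, rfl⟩ x' ⟨wx', hwx', rfl⟩
    have hne : {w ∈ dom | θ w = t}.Nonempty := ⟨wx, hwx⟩
    constructor
    · show sSup _ - sSup _ ≤ _
      rw [sub_le_iff_le_add]
      apply csSup_le (hne.image _)
      rintro b ⟨w, hw, rfl⟩
      have h1 := memp t wx.1 w hw
      have h2 := tri w.1 wx'.1 wx.1
      show w.2 - gauge D' (w.1 - wx'.1) ≤ _ + sSup _
      linarith
    · show sInf _ - sInf _ ≤ _
      rw [sub_le_iff_le_add]
      have hstep : ∀ b ∈ (fun w : Wsp m => w.2 + gauge D' (wx.1 - w.1)) '' {w ∈ dom | θ w = t},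
          sInf ((fun w : Wsp m => w.2 + gauge D' (wx'.1 - w.1)) '' {w ∈ dom | θ w = t})
            - gauge D' (wx'.1 - wx.1) ≤ b := by
        rintro b ⟨w, hw, rfl⟩
        have h1 := memm t wx'.1 w hw
        have h2 := tri wx'.1 wx.1 w.1
        show sInf _ - gauge D' (wx'.1 - wx.1) ≤ w.2 + gauge D' (wx.1 - w.1)
        linarith
      have hle := le_csInf (hne.image _) hstep
      linarith
  · -- closure bounds
    intro t p hp _
    obtain ⟨u, hu, hlim⟩ := mem_closure_iff_seq_limit.1 hp
    constructor
    · have hcont : Continuous (fun z : Wsp m => z.2 + gauge D' (p.1 - z.1)) :=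
        continuous_snd.add (gcont.comp (continuous_const.sub continuous_fst))
      have hlim2 : Filter.Tendsto (fun n => (u n).2 + gauge D' (p.1 - (u n).1))
          Filter.atTop (nhds (p.2 + gauge D' (p.1 - p.1))) := (hcont.tendsto p).comp hlim
      have heval : p.2 + gauge D' (p.1 - p.1) = p.2 := by simp [gauge_zero]
      rw [heval] at hlim2
      exact ge_of_tendsto hlim2 (Filter.Eventually.of_forall fun n => memm t p.1 (u n) (hu n))
    · have hcont : Continuous (fun z : Wsp m => z.2 - gauge D' (z.1 - p.1)) :=
        continuous_snd.sub (gcont.comp (continuous_fst.sub continuous_const))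
      have hlim2 : Filter.Tendsto (fun n => (u n).2 - gauge D' ((u n).1 - p.1))
          Filter.atTop (nhds (p.2 - gauge D' (p.1 - p.1))) := (hcont.tendsto p).comp hlim
      have heval : p.2 - gauge D' (p.1 - p.1) = p.2 := by simp [gauge_zero]
      rw [heval] at hlim2
      exact le_of_tendsto hlim2 (Filter.Eventually.of_forall fun n => memp t p.1 (u n) (hu n))
  · exact hint
  · -- equivalences
    intro t hne
    have hA : interior {w ∈ dom | θ w = t} = ∅ →
        ∀ x ∈ Prod.fst '' {w ∈ dom | θ w = t},
          sInf ((fun w : Wsp m => w.2 + gauge D' (x - w.1)) '' {w ∈ dom | θ w = t})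
            = sSup ((fun w : Wsp m => w.2 - gauge D' (w.1 - x)) '' {w ∈ dom | θ w = t}) := by
      intro hempty x hx
      obtain ⟨w, hw, rfl⟩ := hx
      have h1 := memm t w.1 w hw
      have h2 := memp t w.1 w hw
      simp only [sub_self, gauge_zero, add_zero, sub_zero] at h1 h2
      by_contra hne'
      have hlt : sInf ((fun w' : Wsp m => w'.2 + gauge D' (w.1 - w'.1)) '' {w ∈ dom | θ w = t})
          < sSup ((fun w' : Wsp m => w'.2 - gauge D' (w'.1 - w.1)) '' {w ∈ dom | θ w = t}) :=
        lt_of_le_of_ne (h1.trans h2) hne'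
      have hmem : ((w.1, (sInf ((fun w' : Wsp m => w'.2 + gauge D' (w.1 - w'.1)) ''
            {w ∈ dom | θ w = t})
          + sSup ((fun w' : Wsp m => w'.2 - gauge D' (w'.1 - w.1)) ''
            {w ∈ dom | θ w = t})) / 2) : Wsp m) ∈ interior {w ∈ dom | θ w = t} := by
        rw [hint t]
        simp only [mem_setOf_eq]
        exact ⟨⟨w, hw, rfl⟩, by linarith, by linarith⟩
      rw [hempty] at hmem
      exact hmem
    have hA' : (∀ x ∈ Prod.fst '' {w ∈ dom | θ w = t},
          sInf ((fun w : Wsp m => w.2 + gauge D' (x - w.1)) '' {w ∈ dom | θ w = t})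
            = sSup ((fun w : Wsp m => w.2 - gauge D' (w.1 - x)) '' {w ∈ dom | θ w = t})) →
        interior {w ∈ dom | θ w = t} = ∅ := by
      intro hall
      rw [hint t, eq_empty_iff_forall_notMem]
      rintro p ⟨hx, h1, h2⟩
      have := hall p.1 hx
      linarith
    refine ⟨⟨hA, hA'⟩, ⟨?_, ?_⟩, ⟨?_, ?_⟩⟩
    · -- interior empty → complete Lipschitz graph
      intro hempty
      constructor
      · intro w hw w' hw' hwc
        rw [(aux_isClosed_epiCone hcv h0).frontier_eq]
        refine ⟨hwc, ?_⟩
        rw [aux_interior_epiCone hcv h0]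
        intro hlt
        have hlt' : gauge D' ((w' - w).1) < (w' - w).2 := hlt
        have e1 : (w + (2⁻¹ : ℝ) • (w' - w)) - w = (2⁻¹ : ℝ) • (w' - w) :=
          add_sub_cancel_left w _
        have e2 : w' - (w + (2⁻¹ : ℝ) • (w' - w)) = (2⁻¹ : ℝ) • (w' - w) := by module
        have hg1 : gauge D' (((2⁻¹ : ℝ) • (w' - w)).1) = 2⁻¹ * gauge D' ((w' - w).1) := by
          rw [Prod.smul_fst, gauge_smul_of_nonneg (by norm_num : (0:ℝ) ≤ 2⁻¹), smul_eq_mul]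
        have hs2 : (((2⁻¹ : ℝ) • (w' - w)).2 : ℝ) = 2⁻¹ * (w' - w).2 := by
          rw [Prod.smul_snd, smul_eq_mul]
        have hz := hintz t w hw w' hw' (w + (2⁻¹ : ℝ) • (w' - w))
          (by show gauge D' (((w + (2⁻¹:ℝ) • (w' - w)) - w).1)
                < ((w + (2⁻¹:ℝ) • (w' - w)) - w).2
              rw [e1, hg1, hs2]; linarith)
          (by show gauge D' ((w' - (w + (2⁻¹:ℝ) • (w' - w))).1)
                < (w' - (w + (2⁻¹:ℝ) • (w' - w))).2
              rw [e2, hg1, hs2]; linarith)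
        rw [hempty] at hz
        exact hz
      · intro w hw w' hw' z hz₁ hz₂
        obtain ⟨hzd, hzt⟩ := hcomplete w hw.1 w' hw'.1 (hw.2.trans hw'.2.symm) z hz₁ hz₂
        exact ⟨hzd, hzt.trans hw.2⟩
    · -- complete Lipschitz graph → interior empty
      rintro ⟨hlip, -⟩
      rw [eq_empty_iff_forall_notMem]
      intro p hp
      have hpK := interior_subset hp
      rw [mem_interior_iff_mem_nhds, Metric.mem_nhds_iff] at hp
      obtain ⟨ε, hε, hball⟩ := hp
      have hq : ((p.1, p.2 + ε/2) : Wsp m) ∈ {w ∈ dom | θ w = t} := by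
        apply hball
        rw [Metric.mem_ball, Prod.dist_eq]
        simp only [dist_self]
        rw [Real.dist_eq, show p.2 + ε/2 - p.2 = ε/2 by ring, abs_of_nonneg (by linarith)]
        exact max_lt hε (by linarith)
      have hd : ((p.1, p.2 + ε/2) : Wsp m) - p = ((0 : Euc m), ε/2) := by
        apply Prod.ext <;> simp
      have hC : ((p.1, p.2 + ε/2) : Wsp m) - p ∈ epiCone D' := by
        rw [hd]
        show gauge D' (0 : Euc m) ≤ ε/2
        rw [gauge_zero]; linarith
      have hfr := hlip p hpK _ hq hC
      rw [(aux_isClosed_epiCone hcv h0).frontier_eq] at hfr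
      apply hfr.2
      rw [hd, aux_interior_epiCone hcv h0]
      show gauge D' (0 : Euc m) < ε/2
      rw [gauge_zero]; linarith
    · -- interior empty → graph description
      intro hempty
      have heq := hA hempty
      ext p
      simp only [mem_setOf_eq]
      constructor
      · intro hp
        refine ⟨⟨p, hp, rfl⟩, ?_⟩
        have h1 := memm t p.1 p hp
        have h2 := memp t p.1 p hp
        simp only [sub_self, gauge_zero, add_zero, sub_zero] at h1 h2
        have h3 := heq p.1 ⟨p, hp, rfl⟩
        exact le_antisymm h2 (h3 ▸ h1)
      · rintro ⟨⟨w, hw, hw1⟩, hp2⟩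
        have h1 := memm t w.1 w hw
        have h2 := memp t w.1 w hw
        simp only [sub_self, gauge_zero, add_zero, sub_zero] at h1 h2
        have h3 := heq w.1 ⟨w, hw, rfl⟩
        have hw2 : w.2 = sSup ((fun w' : Wsp m => w'.2 - gauge D' (w'.1 - w.1)) ''
            {w ∈ dom | θ w = t}) := le_antisymm h2 (h3 ▸ h1)
        rw [← hw1] at hp2
        have hpw : p = w := Prod.ext hw1.symm (hp2.trans hw2.symm)
        rw [hpw]
        exact hw
    · -- graph description → interior empty
      intro hgr
      rw [eq_empty_iff_forall_notMem]
      intro p hp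
      have hpK := interior_subset hp
      rw [mem_interior_iff_mem_nhds, Metric.mem_nhds_iff] at hp
      obtain ⟨ε, hε, hball⟩ := hp
      have hq : ((p.1, p.2 + ε/2) : Wsp m) ∈ {w ∈ dom | θ w = t} := by
        apply hball
        rw [Metric.mem_ball, Prod.dist_eq]
        simp only [dist_self]
        rw [Real.dist_eq, show p.2 + ε/2 - p.2 = ε/2 by ring, abs_of_nonneg (by linarith)]
        exact max_lt hε (by linarith)
      have e1 : p.2 = sSup ((fun w : Wsp m => w.2 - gauge D' (w.1 - p.1)) ''
          {w ∈ dom | θ w = t}) := (hgr ▸ hpK).2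
      have e2 : p.2 + ε/2 = sSup ((fun w : Wsp m => w.2 - gauge D' (w.1 - p.1)) ''
          {w ∈ dom | θ w = t}) := (hgr ▸ hq).2
      linarith
end
end

section
/- Let Λ ⊆ ℝ^{d−k} × ℝ^k be σ-compact and let m̃ be a Borel probability measure on ℝ^{d−k} such that the section Λ(a) := {w : (a,w) ∈ Λ} is nonempty for m̃-a.e. a. Then there exist an m̃-conegligible σ-compact set Ã' ⊆ ℝ^{d−k} and countably many functions w_n : Ã' → ℝ^k, n ∈ ℕ, each with σ-compact graph, such that for every a ∈ Ã' one has {w_n(a) : n ∈ ℕ} ⊆ Λ(a) ⊆ clos{w_n(a) : n ∈ ℕ}. -/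
open MeasureTheory Set Metric
open scoped ENNReal
noncomputable section
lemma null_of_le_geo {c : ℝ≥0∞} (h : ∀ s : ℕ, c ≤ 2⁻¹ ^ s) : c = 0 := by
  refine le_antisymm ?_ (by positivity)
  have ht : Filter.Tendsto (fun s : ℕ => (2⁻¹ : ℝ≥0∞) ^ s) Filter.atTop (nhds 0) :=
    ENNReal.tendsto_pow_atTop_nhds_zero_of_lt_one (by norm_num)
  exact ge_of_tendsto' ht h

lemma isSigmaCompact_of_isOpen {d : ℕ} {U : Set (Euc d)} (hU : IsOpen U) :
    IsSigmaCompact U := by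
  refine ⟨fun n => closedBall 0 n ∩ ⋂ (y : Euc d) (_ : y ∉ U), {x | ((n : ℝ) + 1)⁻¹ ≤ dist x y},
    fun n => (isCompact_closedBall 0 n).inter_right ?_, ?_⟩
  · exact isClosed_iInter fun y => isClosed_iInter fun _ =>
      isClosed_le continuous_const (continuous_id.dist continuous_const)
  · apply Set.eq_of_subset_of_subset
    · intro x hx
      obtain ⟨n, hn⟩ := mem_iUnion.1 hx
      simp only [mem_inter_iff, mem_iInter, mem_setOf_eq] at hn
      by_contra hx
      have := hn.2 x hx
      have h2 : (0:ℝ) < ((n:ℝ)+1)⁻¹ := by positivity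
      simp [dist_self] at this
      linarith
    · intro x hx
      obtain ⟨ε, hε, hball⟩ := Metric.isOpen_iff.1 hU x hx
      obtain ⟨n, hn1, hn2⟩ : ∃ n : ℕ, dist x 0 ≤ n ∧ ((n:ℝ)+1)⁻¹ ≤ ε := by
        obtain ⟨n1, hn1⟩ := exists_nat_ge (dist x 0)
        obtain ⟨n2, hn2⟩ := exists_nat_ge ε⁻¹
        refine ⟨max n1 n2, le_trans hn1 (by exact_mod_cast le_max_left _ _), ?_⟩
        rw [inv_le_comm₀ (by positivity) hε]
        calc ε⁻¹ ≤ n2 := hn2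
        _ ≤ (max n1 n2 : ℕ) := by exact_mod_cast le_max_right _ _
        _ ≤ (max n1 n2 : ℕ) + 1 := by linarith
      refine mem_iUnion.2 ⟨n, mem_closedBall.2 hn1, ?_⟩
      simp only [mem_iInter, mem_setOf_eq]
      intro y hy
      by_contra hlt
      push_neg at hlt
      exact hy (hball (by simp only [mem_ball]; rw [dist_comm]; linarith))

lemma IsSigmaCompact.inter_isClosed {X : Type*} [TopologicalSpace X] {s t : Set X}
    (hs : IsSigmaCompact s) (ht : IsClosed t) : IsSigmaCompact (s ∩ t) := by
  obtain ⟨C, hC, rfl⟩ := hs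
  refine ⟨fun n => C n ∩ t, fun n => (hC n).inter_right ht, by rw [iUnion_inter]⟩

lemma exhaust_compacts {d : ℕ} (μ : Measure (Euc d)) [IsProbabilityMeasure μ]
    {S : Set (Euc d)} (hS : MeasurableSet S) :
    ∃ C : ℕ → Set (Euc d), (∀ i, IsCompact (C i)) ∧ (∀ i, C i ⊆ S) ∧
      μ (S \ ⋃ i, C i) = 0 := by
  have h : ∀ i : ℕ, ∃ C ⊆ S, IsCompact C ∧ μ (S \ C) < 2⁻¹ ^ i := fun i =>
    hS.exists_isCompact_diff_lt (measure_ne_top μ S) (pow_ne_zero _ (by norm_num))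
  choose C hCS hCc hCμ using h
  refine ⟨C, hCc, hCS, null_of_le_geo fun s => ?_⟩
  exact le_trans (measure_mono (diff_subset_diff_right (subset_iUnion C s))) (hCμ s).le


lemma sep_finite {X : Type*} [MetricSpace X] (E : ℕ → Set X) (hE : ∀ r, IsCompact (E r))
    (M : ℕ) (Q : ℕ → ℕ → Prop)
    (hdisj : ∀ r r', Q r r' → ∀ x ∈ E r, ∀ y ∈ E r', x ≠ y) :
    ∃ δ > 0, ∀ r, r < M → ∀ r', r' < M → Q r r' →
      ∀ x ∈ E r, ∀ y ∈ E r', δ ≤ dist x y := by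
  classical
  have hp : ∀ p : ℕ × ℕ, ∃ δ : ℝ, 0 < δ ∧
      (Q p.1 p.2 → ∀ x ∈ E p.1, ∀ y ∈ E p.2, δ ≤ dist x y) := by
    intro p
    by_cases hne : (E p.1 ×ˢ E p.2 : Set (X × X)).Nonempty
    · by_cases hQ : Q p.1 p.2
      · obtain ⟨z, hz, hmin⟩ := ((hE p.1).prod (hE p.2)).exists_isMinOn hne
          (f := fun z : X × X => dist z.1 z.2) continuous_dist.continuousOn
        refine ⟨dist z.1 z.2, dist_pos.2 (hdisj _ _ hQ _ hz.1 _ hz.2), ?_⟩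
        exact fun _ x hx y hy => hmin (show ((x, y) : X × X) ∈ _ from ⟨hx, hy⟩)
      · exact ⟨1, one_pos, fun h => absurd h hQ⟩
    · exact ⟨1, one_pos, fun _ x hx y hy => (hne ⟨(x, y), ⟨hx, hy⟩⟩).elim⟩
  choose δf hδpos hδ using hp
  set F : Finset ℝ := insert 1 ((Finset.range M ×ˢ Finset.range M).image δf) with hF
  have hFne : F.Nonempty := ⟨1, by simp [hF]⟩
  refine ⟨F.min' hFne, ?_, ?_⟩
  · rw [gt_iff_lt, Finset.lt_min'_iff]
    intro b hb
    simp only [hF, Finset.mem_insert, Finset.mem_image] at hb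
    rcases hb with rfl | ⟨p, _, rfl⟩
    · exact one_pos
    · exact hδpos p
  · intro r hr r' hr' hQ x hx y hy
    refine le_trans (Finset.min'_le _ (δf (r, r')) ?_) (hδ (r, r') hQ x hx y hy)
    simp only [hF, Finset.mem_insert, Finset.mem_image]
    exact Or.inr ⟨(r, r'), by simp [Finset.mem_product, hr, hr'], rfl⟩


namespace Sel

variable {m k : ℕ}

abbrev Dat (m k : ℕ) := (ℕ → Set (Euc m)) × (ℕ → Set (Euc m × Euc k))

/-- children pieces: subdivide each piece by closed balls of radius `r` around
the dense sequence `u`, with first-match disjointification. -/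
def step (u : ℕ → Euc k) (r : ℝ) (d : Dat m k) : Dat m k :=
  ⟨fun j => (d.1 (Nat.unpair j).1 ∩
        Prod.fst '' (d.2 (Nat.unpair j).1 ∩ (univ ×ˢ closedBall (u (Nat.unpair j).2) r))) \
      ⋃ (q' : ℕ) (_ : q' < (Nat.unpair j).2),
        Prod.fst '' (d.2 (Nat.unpair j).1 ∩ (univ ×ˢ closedBall (u q') r)),
   fun j => d.2 (Nat.unpair j).1 ∩ (univ ×ˢ closedBall (u (Nat.unpair j).2) r)⟩

def lvls (K : Set (Euc m × Euc k)) (u : ℕ → Euc k) : ℕ → Dat m k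
  | 0 => ⟨fun j => if j = 0 then Prod.fst '' K else ∅, fun j => if j = 0 then K else ∅⟩
  | n + 1 => step u ((1/2 : ℝ) ^ (n+1)) (lvls K u n)

structure Inv (K : Set (Euc m × Euc k)) (d : Dat m k) : Prop where
  meas : ∀ j, MeasurableSet (d.1 j)
  disj : ∀ j j', j ≠ j' → ∀ a, a ∈ d.1 j → a ∈ d.1 j' → False
  cover : (⋃ j, d.1 j) = Prod.fst '' K
  cpt : ∀ j, IsCompact (d.2 j)
  subK : ∀ j, d.2 j ⊆ K
  sec : ∀ j, d.1 j ⊆ Prod.fst '' d.2 j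

lemma step_inv {K : Set (Euc m × Euc k)} {u : ℕ → Euc k} {r : ℝ} {d : Dat m k}
    (hu : DenseRange u) (hr : 0 < r) (h : Inv K d) : Inv K (step u r d) := by
  have hAc : ∀ i q, IsCompact (Prod.fst '' (d.2 i ∩ (univ ×ˢ closedBall (u q) r))) :=
    fun i q => (((h.cpt i).inter_right
      (isClosed_univ.prod Metric.isClosed_closedBall)).image continuous_fst)
  constructor
  · intro j
    exact (((h.meas (Nat.unpair j).1).inter (hAc _ _).measurableSet).diff
      (MeasurableSet.iUnion fun q' => MeasurableSet.iUnion fun _ => (hAc _ _).measurableSet))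
  · intro j j' hjj' a haj haj'
    have hpair : (Nat.unpair j) ≠ (Nat.unpair j') := by
      intro hEq
      exact hjj' (by rw [← Nat.pair_unpair j, ← Nat.pair_unpair j', hEq])
    rcases eq_or_ne (Nat.unpair j).1 (Nat.unpair j').1 with hi | hi
    · -- same parent, different ball index
      have hq : (Nat.unpair j).2 ≠ (Nat.unpair j').2 := by
        intro hq; exact hpair (Prod.ext hi hq)
      rcases hq.lt_or_gt with hlt | hlt
      · -- (unpair j).2 < (unpair j').2 : a ∈ A i q contradicts the subtraction in j'
        refine haj'.2 (mem_iUnion.2 ⟨(Nat.unpair j).2, mem_iUnion.2 ⟨hlt, ?_⟩⟩)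
        have := haj.1.2
        rwa [hi] at this
      · refine haj.2 (mem_iUnion.2 ⟨(Nat.unpair j').2, mem_iUnion.2 ⟨hlt, ?_⟩⟩)
        have := haj'.1.2
        rwa [← hi] at this
    · exact h.disj _ _ hi a haj.1.1 haj'.1.1
  · apply Set.eq_of_subset_of_subset
    · refine iUnion_subset fun j => ?_
      refine subset_trans (fun a ha => ha.1.1) ?_
      rw [← h.cover]
      exact subset_iUnion _ _
    · rw [← h.cover]
      refine iUnion_subset fun i a ha => ?_
      obtain ⟨w, hw⟩ : ∃ w, (a, w) ∈ d.2 i := by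
        obtain ⟨p, hp, hpa⟩ := h.sec i ha
        exact ⟨p.2, by rw [← hpa]; exact hp⟩
      obtain ⟨q0, hq0⟩ := hu.exists_dist_lt w hr
      have hex : ∃ q, a ∈ Prod.fst '' (d.2 i ∩ (univ ×ˢ closedBall (u q) r)) :=
        ⟨q0, ⟨(a, w), ⟨hw, ⟨trivial, mem_closedBall.2 hq0.le⟩⟩, rfl⟩⟩
      classical
      refine mem_iUnion.2 ⟨Nat.pair i (Nat.find hex), ?_, ?_⟩
      · rw [Nat.unpair_pair]
        exact ⟨ha, Nat.find_spec hex⟩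
      · rw [Nat.unpair_pair]
        intro hmem
        obtain ⟨q', hq'⟩ := mem_iUnion.1 hmem
        obtain ⟨hq'lt, hq'mem⟩ := mem_iUnion.1 hq'
        exact Nat.find_min hex hq'lt hq'mem
  · intro j
    exact (h.cpt _).inter_right (isClosed_univ.prod Metric.isClosed_closedBall)
  · intro j
    exact subset_trans inter_subset_left (h.subK _)
  · intro j a ha
    exact ha.1.2

lemma lvls_inv {K : Set (Euc m × Euc k)} {u : ℕ → Euc k}
    (hK : IsCompact K) (hu : DenseRange u) : ∀ n, Inv K (lvls K u n) := by
  intro n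
  induction n with
  | zero =>
    constructor
    · intro j
      by_cases hj : j = 0 <;> simp [lvls, hj, (hK.image continuous_fst).measurableSet]
    · intro j j' hjj' a haj haj'
      by_cases hj : j = 0 <;> by_cases hj' : j' = 0 <;>
        simp_all [lvls]
    · apply Set.eq_of_subset_of_subset
      · refine iUnion_subset fun j => ?_
        by_cases hj : j = 0 <;> simp [lvls, hj]
      · intro a ha
        exact mem_iUnion.2 ⟨0, by simpa [lvls] using ha⟩
    · intro j
      by_cases hj : j = 0 <;> simp [lvls, hj, hK, isCompact_empty]
    · intro j
      by_cases hj : j = 0 <;> simp [lvls, hj]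
    · intro j a ha
      by_cases hj : j = 0 <;> simp_all [lvls]
  | succ n ih => exact step_inv hu (by positivity) ih

lemma lvls_chain {K : Set (Euc m × Euc k)} {u : ℕ → Euc k} (n j : ℕ) :
    (lvls K u (n+1)).1 j ⊆ (lvls K u n).1 (Nat.unpair j).1 ∧
      (lvls K u (n+1)).2 j ⊆ (lvls K u n).2 (Nat.unpair j).1 :=
  ⟨fun _ ha => ha.1.1, fun _ hp => hp.1⟩

lemma lvls_ball {K : Set (Euc m × Euc k)} {u : ℕ → Euc k} (n j : ℕ) :
    (lvls K u (n+1)).2 j ⊆ univ ×ˢ closedBall (u (Nat.unpair j).2) ((1/2 : ℝ) ^ (n+1)) :=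
  fun _ hp => hp.2


theorem master {m k : ℕ} {K : Set (Euc m × Euc k)} (hK : IsCompact K)
    (μ : Measure (Euc m)) [IsProbabilityMeasure μ] :
    ∃ (f : Euc m → Euc k) (T : ℕ → Set (Euc m)),
      (∀ s, IsCompact (T s)) ∧ (∀ s, T s ⊆ Prod.fst '' K) ∧
      μ ((Prod.fst '' K) \ ⋃ s, T s) = 0 ∧ (∀ s, ContinuousOn f (T s)) ∧
      ∀ a ∈ Prod.fst '' K, (a, f a) ∈ K := by
  classical
  obtain ⟨u, hu⟩ := TopologicalSpace.exists_dense_seq (Euc k)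
  set P : Set (Euc m) := Prod.fst '' K with hP
  have inv : ∀ n, Inv K (lvls K u n) := lvls_inv hK hu
  set Sec : ℕ → Euc m → Set (Euc k) :=
    fun n a => {v | ∃ j, a ∈ (lvls K u n).1 j ∧ (a, v) ∈ (lvls K u n).2 j} with hSec
  have hmemP : ∀ n j a, a ∈ (lvls K u n).1 j → a ∈ P := fun n j a ha => by
    rw [hP, ← (inv n).cover]; exact mem_iUnion.2 ⟨j, ha⟩
  have hSecAnti : ∀ a n, Sec (n+1) a ⊆ Sec n a := by
    rintro a n v ⟨j, haj, hvj⟩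
    exact ⟨(Nat.unpair j).1, (lvls_chain n j).1 haj, (lvls_chain n j).2 hvj⟩
  have hSecNe : ∀ n, ∀ a ∈ P, (Sec n a).Nonempty := by
    intro n a ha
    rw [hP, ← (inv n).cover] at ha
    obtain ⟨j, haj⟩ := mem_iUnion.1 ha
    obtain ⟨p, hp, hpa⟩ := (inv n).sec j haj
    exact ⟨p.2, j, haj, by rw [← hpa]; exact hp⟩
  have hSecEq : ∀ n j a, a ∈ (lvls K u n).1 j →
      Sec n a = {v | (a, v) ∈ (lvls K u n).2 j} := by
    intro n j a ha
    apply Set.eq_of_subset_of_subset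
    · rintro v ⟨j', haj', hvj'⟩
      rcases eq_or_ne j' j with rfl | hne
      · exact hvj'
      · exact ((inv n).disj j' j hne a haj' ha).elim
    · intro v hv
      exact ⟨j, ha, hv⟩
  have hSecClosed : ∀ n, ∀ a ∈ P, IsClosed (Sec n a) := by
    intro n a ha
    have ha' := ha
    rw [hP, ← (inv n).cover] at ha'
    obtain ⟨j, haj⟩ := mem_iUnion.1 ha'
    rw [hSecEq n j a haj]
    exact ((inv n).cpt j).isClosed.preimage (Continuous.prodMk_right a)
  have hSec0cpt : ∀ a ∈ P, IsCompact (Sec 0 a) := by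
    intro a ha
    refine IsCompact.of_isClosed_subset (hK.image continuous_snd) (hSecClosed 0 a ha) ?_
    rintro v ⟨j, _, hvj⟩
    exact ⟨(a, v), (inv 0).subK j hvj, rfl⟩
  set f : Euc m → Euc k := fun a => if h : (⋂ n, Sec n a).Nonempty then h.some else 0 with hf
  have hfmem : ∀ a ∈ P, ∀ n, f a ∈ Sec n a := by
    intro a ha n
    have hne : (⋂ n, Sec n a).Nonempty :=
      IsCompact.nonempty_iInter_of_sequence_nonempty_isCompact_isClosed _
        (fun i => hSecAnti a i) (fun i => hSecNe i a ha) (hSec0cpt a ha)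
        (fun i => hSecClosed i a ha)
    have : f a = hne.some := by rw [hf]; simp only [dif_pos hne]
    rw [this]
    exact mem_iInter.1 hne.some_mem n
  have hfK : ∀ a ∈ P, (a, f a) ∈ K := by
    intro a ha
    obtain ⟨j, _, hvj⟩ := hfmem a ha 0
    exact (inv 0).subK j hvj
  have hosc : ∀ n j, ∀ a ∈ (lvls K u (n+1)).1 j, ∀ a' ∈ (lvls K u (n+1)).1 j,
      dist (f a) (f a') ≤ 2 * (1/2 : ℝ) ^ (n+1) := by
    intro n j a ha a' ha'
    have h1 : (a, f a) ∈ (lvls K u (n+1)).2 j := by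
      have h := hfmem a (hmemP _ _ _ ha) (n+1)
      rwa [hSecEq (n+1) j a ha] at h
    have h2 : (a', f a') ∈ (lvls K u (n+1)).2 j := by
      have h := hfmem a' (hmemP _ _ _ ha') (n+1)
      rwa [hSecEq (n+1) j a' ha'] at h
    have hb1 : dist (f a) (u (Nat.unpair j).2) ≤ (1/2:ℝ)^(n+1) :=
      mem_closedBall.1 (lvls_ball n j h1).2
    have hb2 : dist (f a') (u (Nat.unpair j).2) ≤ (1/2:ℝ)^(n+1) :=
      mem_closedBall.1 (lvls_ball n j h2).2
    calc dist (f a) (f a') ≤ dist (f a) (u (Nat.unpair j).2) + dist (u (Nat.unpair j).2) (f a') :=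
          dist_triangle _ _ _
      _ ≤ (1/2:ℝ)^(n+1) + (1/2:ℝ)^(n+1) := by
          rw [dist_comm (u (Nat.unpair j).2) (f a')]; exact add_le_add hb1 hb2
      _ = 2 * (1/2:ℝ)^(n+1) := by ring
  -- exhaustion by compacts inside each piece
  have hEx : ∀ n j, ∃ C : ℕ → Set (Euc m), (∀ i, IsCompact (C i)) ∧
      (∀ i, C i ⊆ (lvls K u n).1 j) ∧ μ ((lvls K u n).1 j \ ⋃ i, C i) = 0 :=
    fun n j => exhaust_compacts μ ((inv n).meas j)
  choose C hCc hCsub hCμ using hEx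
  set E : ℕ → ℕ → Set (Euc m) := fun n r => C n (Nat.unpair r).1 (Nat.unpair r).2 with hE
  set po : ℕ → ℕ → ℕ := fun n r => (Nat.unpair r).1 with hpo
  have hEc : ∀ n r, IsCompact (E n r) := fun n r => hCc _ _ _
  have hEsub : ∀ n r, E n r ⊆ (lvls K u n).1 (po n r) := fun n r => hCsub _ _ _
  have hEnull : ∀ n, μ (P \ ⋃ r, E n r) = 0 := by
    intro n
    have hsub : P \ ⋃ r, E n r ⊆ ⋃ j, ((lvls K u n).1 j \ ⋃ i, C n j i) := by
      rintro a ⟨haP, haE⟩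
      have haP' := haP
      rw [hP, ← (inv n).cover] at haP'
      obtain ⟨j, haj⟩ := mem_iUnion.1 haP'
      refine mem_iUnion.2 ⟨j, haj, fun hmem => ?_⟩
      obtain ⟨i, hi⟩ := mem_iUnion.1 hmem
      refine haE (mem_iUnion.2 ⟨Nat.pair j i, ?_⟩)
      rw [hE]
      simp only [Nat.unpair_pair]
      exact hi
    exact measure_mono_null hsub (measure_iUnion_null fun j => hCμ n j)
  have hMex : ∀ n s : ℕ, ∃ M : ℕ,
      μ (P \ ⋃ (r : ℕ) (_ : r < M), E n r) < 2⁻¹ ^ (n + s + 1) := by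
    intro n s
    have hanti : Antitone (fun M : ℕ => P \ ⋃ (r : ℕ) (_ : r < M), E n r) := by
      intro M M' hMM'
      refine diff_subset_diff_right (iUnion₂_subset fun r hr => ?_)
      exact subset_iUnion₂ (s := fun r (_ : r < M') => E n r) r (lt_of_lt_of_le hr hMM')
    have hnm : ∀ M : ℕ, NullMeasurableSet (P \ ⋃ (r : ℕ) (_ : r < M), E n r) μ := fun M =>
      ((hK.image continuous_fst).measurableSet.diff
        (MeasurableSet.iUnion fun r => MeasurableSet.iUnion fun _ =>
          (hEc n r).measurableSet)).nullMeasurableSet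
    have hten := tendsto_measure_iInter_atTop hnm hanti ⟨0, measure_ne_top μ _⟩
    have hint : (⋂ M : ℕ, (P \ ⋃ (r : ℕ) (_ : r < M), E n r)) = P \ ⋃ r, E n r := by
      rw [← diff_iUnion]
      congr 1
      apply Set.eq_of_subset_of_subset
      · exact iUnion_subset fun M => iUnion_mono fun r => iUnion_subset fun _ => subset_refl _
      · refine iUnion_subset fun r a ha => ?_
        exact mem_iUnion.2 ⟨r + 1, mem_iUnion.2 ⟨r, mem_iUnion.2 ⟨Nat.lt_succ_self r, ha⟩⟩⟩
    rw [hint, hEnull n] at hten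
    have hev : ∀ᶠ M' in Filter.atTop,
        μ (P \ ⋃ (r : ℕ) (_ : r < M'), E n r) < 2⁻¹ ^ (n + s + 1) :=
      hten.eventually_lt_const (ENNReal.pow_pos (ENNReal.inv_pos.2 ENNReal.ofNat_ne_top) _)
    exact hev.exists
  choose M hM using hMex
  set T : ℕ → Set (Euc m) := fun s => ⋂ n, ⋃ (r : ℕ) (_ : r < M n s), E n r with hT
  have hTfin : ∀ n s, IsCompact (⋃ (r : ℕ) (_ : r < M n s), E n r) := by
    intro n s
    exact Set.Finite.isCompact_biUnion (Set.finite_Iio _) fun r _ => hEc n r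
  have hTc : ∀ s, IsCompact (T s) :=
    fun s => IsCompact.of_isClosed_subset (hTfin 0 s)
      (isClosed_iInter fun n => (hTfin n s).isClosed) (iInter_subset _ 0)
  have hTsub : ∀ s, T s ⊆ P := by
    intro s a ha
    have h0 := iInter_subset
      (fun n => ⋃ (r : ℕ) (_ : r < M n s), E n r) 0 ha
    obtain ⟨r, hr⟩ := mem_iUnion.1 h0
    obtain ⟨_, har⟩ := mem_iUnion.1 hr
    exact hmemP 0 _ a (hEsub 0 r har)
  have hgeo : ∀ s : ℕ, (∑' n : ℕ, (2⁻¹ : ℝ≥0∞) ^ (n + s + 1)) = 2⁻¹ ^ s := by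
    intro s
    have h1 : ∀ n : ℕ, (2⁻¹ : ℝ≥0∞) ^ (n + s + 1) = 2⁻¹ ^ n * (2⁻¹ ^ s * 2⁻¹) := by
      intro n; rw [← pow_succ, ← pow_add, add_assoc]
    simp only [h1]
    rw [ENNReal.tsum_mul_right, ENNReal.tsum_geometric]
    have h2 : (1 - 2⁻¹ : ℝ≥0∞)⁻¹ = 2 := by
      rw [ENNReal.one_sub_inv_two, inv_inv]
    rw [h2]
    rw [mul_comm (2⁻¹ ^ s : ℝ≥0∞) 2⁻¹, ← mul_assoc]
    rw [ENNReal.mul_inv_cancel (by norm_num) (by norm_num), one_mul]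
  have hTμ : ∀ s, μ (P \ T s) ≤ 2⁻¹ ^ s := by
    intro s
    calc μ (P \ T s) = μ (⋃ n, (P \ ⋃ (r : ℕ) (_ : r < M n s), E n r)) := by
          rw [hT, diff_iInter]
      _ ≤ ∑' n, μ (P \ ⋃ (r : ℕ) (_ : r < M n s), E n r) := measure_iUnion_le _
      _ ≤ ∑' n : ℕ, (2⁻¹ : ℝ≥0∞) ^ (n + s + 1) := ENNReal.tsum_le_tsum fun n => (hM n s).le
      _ = 2⁻¹ ^ s := hgeo s
  have hTnull : μ (P \ ⋃ s, T s) = 0 := null_of_le_geo fun s =>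
    le_trans (measure_mono (diff_subset_diff_right (subset_iUnion _ s))) (hTμ s)
  have hTcont : ∀ s, ContinuousOn f (T s) := by
    intro s
    rw [Metric.continuousOn_iff]
    intro a haT ε hε
    obtain ⟨n0, hn0⟩ := exists_pow_lt_of_lt_one (half_pos hε) (by norm_num : (1/2:ℝ) < 1)
    have hosc' : 2 * (1/2:ℝ)^(n0+1) < ε := by
      have h : 2 * (1/2:ℝ)^(n0+1) = (1/2:ℝ)^n0 := by ring
      rw [h]; linarith
    have hQ : ∀ r r', (po (n0+1) r ≠ po (n0+1) r') →
        ∀ x ∈ E (n0+1) r, ∀ y ∈ E (n0+1) r', x ≠ y := by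
      intro r r' hne x hx y hy hxy
      refine (inv (n0+1)).disj _ _ hne x (hEsub _ _ hx) ?_
      rw [hxy]; exact hEsub _ _ hy
    obtain ⟨δ, hδpos, hδ⟩ := sep_finite (E (n0+1)) (hEc (n0+1)) (M (n0+1) s)
      (fun r r' => po (n0+1) r ≠ po (n0+1) r') hQ
    refine ⟨δ, hδpos, ?_⟩
    intro a' ha'T hdist
    have haE := mem_iInter.1 haT (n0+1)
    obtain ⟨r, hr⟩ := mem_iUnion.1 haE
    obtain ⟨hrM, har⟩ := mem_iUnion.1 hr
    have ha'E := mem_iInter.1 ha'T (n0+1)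
    obtain ⟨r', hr'⟩ := mem_iUnion.1 ha'E
    obtain ⟨hr'M, ha'r⟩ := mem_iUnion.1 hr'
    by_cases hpoeq : po (n0+1) r = po (n0+1) r'
    · have h1 : a ∈ (lvls K u (n0+1)).1 (po (n0+1) r) := hEsub _ _ har
      have h2 : a' ∈ (lvls K u (n0+1)).1 (po (n0+1) r) := by
        rw [hpoeq]; exact hEsub _ _ ha'r
      exact lt_of_le_of_lt (hosc n0 (po (n0+1) r) a' h2 a h1) hosc'
    · exact absurd hdist (not_lt.2 (hδ r' hr'M r hrM (Ne.symm hpoeq) a' ha'r a har))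
  exact ⟨f, T, hTc, hTsub, hTnull, hTcont, hfK⟩

end Sel

lemma sigmaCompact_union {X : Type*} [TopologicalSpace X] {s t : Set X}
    (hs : IsSigmaCompact s) (ht : IsSigmaCompact t) : IsSigmaCompact (s ∪ t) := by
  rw [union_eq_iUnion]
  exact isSigmaCompact_iUnion _ (fun b => by cases b <;> simpa)

/-- **Countable dense selections of the sections of a σ-compact set**
(Lemma 7.4 of Bianchini–Daneri). -/
theorem statement_15 {m k : ℕ} (Λ : Set (Euc m × Euc k))
    (hΛ : IsSigmaCompact Λ)
    (mt : Measure (Euc m)) [IsProbabilityMeasure mt]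
    (hsec : ∀ᵐ a ∂mt, ∃ w, (a, w) ∈ Λ) :
    ∃ A' : Set (Euc m), IsSigmaCompact A' ∧ mt A'ᶜ = 0 ∧
      ∃ w : ℕ → Euc m → Euc k,
        (∀ n, IsSigmaCompact {p : Euc m × Euc k | p.1 ∈ A' ∧ p.2 = w n p.1}) ∧
        ∀ a ∈ A', (∀ n, (a, w n a) ∈ Λ) ∧
          {v | (a, v) ∈ Λ} ⊆ closure {v | ∃ n, v = w n a} := by
  classical
  obtain ⟨KK, hKKc, hKKU⟩ := hΛ
  obtain ⟨u, hu⟩ := TopologicalSpace.exists_dense_seq (Euc k)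
  set dec : ℕ → ℕ × ℕ × ℕ := fun e => ((Nat.unpair e).1, (Nat.unpair (Nat.unpair e).2).1,
    (Nat.unpair (Nat.unpair e).2).2) with hdec
  set KE : ℕ → Set (Euc m × Euc k) := fun e =>
    KK (dec e).1 ∩ (univ ×ˢ closedBall (u (dec e).2.1) ((1/2 : ℝ) ^ (dec e).2.2)) with hKE
  have hKEc : ∀ e, IsCompact (KE e) :=
    fun e => (hKKc _).inter_right (isClosed_univ.prod Metric.isClosed_closedBall)
  have hKEsubΛ : ∀ e, KE e ⊆ Λ := by
    intro e p hp
    rw [← hKKU]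
    exact mem_iUnion.2 ⟨(dec e).1, hp.1⟩
  have hKKsubΛ : ∀ i, KK i ⊆ Λ := by
    intro i p hp
    rw [← hKKU]
    exact mem_iUnion.2 ⟨i, hp⟩
  choose f T hTc hTsub hTnull hTcont hfK using fun e => Sel.master (hKEc e) mt
  choose g Tg hTgc hTgsub hTgnull hTgcont hgK using fun i => Sel.master (hKKc i) mt
  set PE : ℕ → Set (Euc m) := fun e => Prod.fst '' KE e with hPE
  set PP : ℕ → Set (Euc m) := fun i => Prod.fst '' KK i with hPP
  have hPEc : ∀ e, IsCompact (PE e) := fun e => (hKEc e).image continuous_fst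
  have hPPc : ∀ i, IsCompact (PP i) := fun i => (hKKc i).image continuous_fst
  set A0 : Set (Euc m) := ⋃ i, PP i with hA0
  have hA0meas : MeasurableSet A0 :=
    MeasurableSet.iUnion fun i => (hPPc i).measurableSet
  set N : Set (Euc m) := (⋃ e, (PE e \ ⋃ s, T e s)) ∪ (⋃ i, (PP i \ ⋃ s, Tg i s)) with hN
  have hNnull : mt N = 0 :=
    measure_union_null (measure_iUnion_null hTnull) (measure_iUnion_null hTgnull)
  have hNmeas : MeasurableSet N := by
    refine MeasurableSet.union ?_ ?_
    · exact MeasurableSet.iUnion fun e => (hPEc e).measurableSet.diff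
        (MeasurableSet.iUnion fun s => (hTc e s).measurableSet)
    · exact MeasurableSet.iUnion fun i => (hPPc i).measurableSet.diff
        (MeasurableSet.iUnion fun s => (hTgc i s).measurableSet)
  have hA0c : mt A0ᶜ = 0 := by
    have hset : {a : Euc m | ¬ ∃ w, (a, w) ∈ Λ} = A0ᶜ := by
      ext a
      constructor
      · intro h ha
        obtain ⟨i, hi⟩ := mem_iUnion.1 ha
        obtain ⟨p, hp, hpa⟩ := hi
        refine h ⟨p.2, ?_⟩
        rw [← hKKU]
        refine mem_iUnion.2 ⟨i, ?_⟩
        rw [← hpa]; exact hp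
      · rintro h ⟨w, hw⟩
        rw [← hKKU] at hw
        obtain ⟨i, hi⟩ := mem_iUnion.1 hw
        exact h (mem_iUnion.2 ⟨i, ⟨(a, w), hi, rfl⟩⟩)
    rw [← hset]
    exact (ae_iff.1 hsec)
  set S : Set (Euc m) := A0 \ N with hS
  obtain ⟨R, hRc, hRsub, hRnull⟩ := exhaust_compacts mt (hA0meas.diff hNmeas)
  set A' : Set (Euc m) := ⋃ l, R l with hA'
  have hA'S : A' ⊆ S := iUnion_subset hRsub
  have hA'sc : IsSigmaCompact A' := ⟨R, hRc, rfl⟩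
  have hA'null : mt A'ᶜ = 0 := by
    have hsub : A'ᶜ ⊆ (A0ᶜ ∪ N) ∪ (S \ A') := by
      intro a ha
      by_cases haS : a ∈ S
      · exact Or.inr ⟨haS, ha⟩
      · left
        by_cases haA : a ∈ A0
        · right
          by_contra haN
          exact haS ⟨haA, haN⟩
        · exact Or.inl haA
    exact measure_mono_null hsub
      (measure_union_null (measure_union_null hA0c hNnull) hRnull)
  set base : Euc m → Euc k := fun a => if h : ∃ i, a ∈ PP i then g (Nat.find h) a else 0
    with hbase
  set W : ℕ → Euc m → Euc k := fun e a => if a ∈ PE e then f e a else base a with hW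
  -- the graph of each W e over A' is σ-compact
  have hgraph : ∀ e, IsSigmaCompact {p : Euc m × Euc k | p.1 ∈ A' ∧ p.2 = W e p.1} := by
    intro e
    have hset : {p : Euc m × Euc k | p.1 ∈ A' ∧ p.2 = W e p.1} =
        (⋃ (l : ℕ), ⋃ (s : ℕ), (fun a => (a, f e a)) '' (R l ∩ PE e ∩ T e s)) ∪
        (⋃ (i : ℕ), ⋃ (l : ℕ), ⋃ (s : ℕ), (fun a => (a, g i a)) ''
          ((R l ∩ PP i ∩ Tg i s) ∩ ((PE e)ᶜ ∩ (⋃ (i' : ℕ) (_ : i' < i), PP i')ᶜ))) := by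
      apply Set.eq_of_subset_of_subset
      · rintro p ⟨hpA, hpW⟩
        obtain ⟨l, hl⟩ := mem_iUnion.1 hpA
        obtain ⟨haA0, haN⟩ := hRsub l hl
        by_cases hape : p.1 ∈ PE e
        · have hWa : W e p.1 = f e p.1 := if_pos hape
          have haT : p.1 ∈ ⋃ s, T e s := by
            by_contra h
            exact haN (Or.inl (mem_iUnion.2 ⟨e, hape, h⟩))
          obtain ⟨s, hs⟩ := mem_iUnion.1 haT
          refine Or.inl (mem_iUnion.2 ⟨l, mem_iUnion.2 ⟨s, ⟨p.1, ⟨⟨hl, hape⟩, hs⟩, ?_⟩⟩⟩)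
          exact Prod.ext rfl (hpW.trans hWa).symm
        · have hWa : W e p.1 = base p.1 := if_neg hape
          have hex : ∃ i, p.1 ∈ PP i := mem_iUnion.1 haA0
          have hbv : base p.1 = g (Nat.find hex) p.1 := dif_pos hex
          have haTg : p.1 ∈ ⋃ s, Tg (Nat.find hex) s := by
            by_contra h
            exact haN (Or.inr (mem_iUnion.2 ⟨Nat.find hex, Nat.find_spec hex, h⟩))
          obtain ⟨s, hs⟩ := mem_iUnion.1 haTg
          refine Or.inr (mem_iUnion.2 ⟨Nat.find hex, mem_iUnion.2 ⟨l, mem_iUnion.2 ⟨s,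
            ⟨p.1, ⟨⟨⟨hl, Nat.find_spec hex⟩, hs⟩, hape, ?_⟩, ?_⟩⟩⟩⟩)
          · intro hmem
            obtain ⟨i', hi'⟩ := mem_iUnion.1 hmem
            obtain ⟨hi'lt, hi'm⟩ := mem_iUnion.1 hi'
            exact Nat.find_min hex hi'lt hi'm
          · exact Prod.ext rfl (hpW.trans (hWa.trans hbv)).symm
      · rintro p (hp | hp)
        · obtain ⟨l, hp⟩ := mem_iUnion.1 hp
          obtain ⟨s, hp⟩ := mem_iUnion.1 hp
          obtain ⟨a, ⟨⟨hal, hape⟩, _⟩, rfl⟩ := hp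
          exact ⟨mem_iUnion.2 ⟨l, hal⟩, (if_pos hape).symm⟩
        · obtain ⟨i, hp⟩ := mem_iUnion.1 hp
          obtain ⟨l, hp⟩ := mem_iUnion.1 hp
          obtain ⟨s, hp⟩ := mem_iUnion.1 hp
          obtain ⟨a, ⟨⟨⟨hal, hapi⟩, _⟩, hape, hlt⟩, rfl⟩ := hp
          refine ⟨mem_iUnion.2 ⟨l, hal⟩, ?_⟩
          have hex : ∃ i', a ∈ PP i' := ⟨i, hapi⟩
          have h1 : W e a = base a := if_neg hape
          have h2 : base a = g (Nat.find hex) a := dif_pos hex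
          have h3 : Nat.find hex = i := by
            refine le_antisymm (Nat.find_min' hex hapi) ?_
            by_contra hlt'
            push_neg at hlt'
            exact hlt (mem_iUnion.2 ⟨Nat.find hex, mem_iUnion.2 ⟨hlt', Nat.find_spec hex⟩⟩)
          rw [h1, h2, h3]
    rw [hset]
    apply sigmaCompact_union
    · refine isSigmaCompact_iUnion _ fun l => isSigmaCompact_iUnion _ fun s => ?_
      refine (IsCompact.image_of_continuousOn ?_ ?_).isSigmaCompact
      · exact ((hRc l).inter_right (hPEc e).isClosed).inter_right (hTc e s).isClosed
      · exact (continuousOn_id.prodMk (hTcont e s)).mono inter_subset_right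
    · refine isSigmaCompact_iUnion _ fun i => isSigmaCompact_iUnion _ fun l =>
        isSigmaCompact_iUnion _ fun s => ?_
      have hO : IsOpen ((PE e)ᶜ ∩ (⋃ (i' : ℕ) (_ : i' < i), PP i')ᶜ) := by
        refine IsOpen.inter (isOpen_compl_iff.2 (hPEc e).isClosed) ?_
        exact isOpen_compl_iff.2 (Set.Finite.isClosed_biUnion (Set.finite_Iio i)
          fun i' _ => (hPPc i').isClosed)
      have hXc : IsCompact (R l ∩ PP i ∩ Tg i s) :=
        ((hRc l).inter_right (hPPc i).isClosed).inter_right (hTgc i s).isClosed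
      have hsc : IsSigmaCompact ((R l ∩ PP i ∩ Tg i s) ∩
          ((PE e)ᶜ ∩ (⋃ (i' : ℕ) (_ : i' < i), PP i')ᶜ)) := by
        rw [inter_comm]
        exact (isSigmaCompact_of_isOpen hO).inter_isClosed hXc.isClosed
      refine hsc.image_of_continuousOn ?_
      refine (continuousOn_id.prodMk ((hTgcont i s).mono ?_)).mono (subset_refl _)
      intro a ha
      exact ha.1.2
  refine ⟨A', hA'sc, hA'null, W, hgraph, ?_⟩
  intro a haA'
  have haS := hA'S haA'
  have haA0 := haS.1
  constructor
  · intro e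
    by_cases hape : a ∈ PE e
    · have : W e a = f e a := if_pos hape
      rw [this]
      exact hKEsubΛ e (hfK e a hape)
    · have h1 : W e a = base a := if_neg hape
      have hex : ∃ i, a ∈ PP i := mem_iUnion.1 haA0
      have h2 : base a = g (Nat.find hex) a := dif_pos hex
      rw [h1, h2]
      exact hKKsubΛ _ (hgK _ a (Nat.find_spec hex))
  · intro v hv
    rw [Metric.mem_closure_iff]
    intro ε hε
    rw [← hKKU] at hv
    obtain ⟨i, hi⟩ := mem_iUnion.1 hv
    obtain ⟨n1, hn1⟩ := exists_pow_lt_of_lt_one (half_pos hε) (by norm_num : (1/2:ℝ) < 1)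
    obtain ⟨q, hq⟩ := hu.exists_dist_lt v (pow_pos (by norm_num : (0:ℝ) < 1/2) n1)
    set e := Nat.pair i (Nat.pair q n1) with he
    have hdece : dec e = (i, q, n1) := by
      simp [hdec, he, Nat.unpair_pair]
    have hmemKE : (a, v) ∈ KE e := by
      simp only [hKE, hdec, he, Nat.unpair_pair]
      exact ⟨hi, trivial, mem_closedBall.2 hq.le⟩
    have hape : a ∈ PE e := ⟨(a, v), hmemKE, rfl⟩
    have hWa : W e a = f e a := if_pos hape
    have hfmem : (a, f e a) ∈ KE e := hfK e a hape
    have hfball : dist (f e a) (u q) ≤ (1/2:ℝ)^n1 := by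
      have h2 := hfK e a hape
      simp only [hKE, hdec, he, Nat.unpair_pair] at h2
      exact mem_closedBall.1 h2.2.2
    refine ⟨W e a, ⟨e, rfl⟩, ?_⟩
    rw [hWa]
    calc dist v (f e a) ≤ dist v (u q) + dist (u q) (f e a) := dist_triangle _ _ _
      _ ≤ (1/2:ℝ)^n1 + (1/2:ℝ)^n1 := by
          rw [dist_comm (u q) (f e a)]
          exact add_le_add hq.le hfball
      _ = 2 * (1/2:ℝ)^n1 := by ring
      _ < ε := by
          have h : 2 * (1/2:ℝ)^n1 < 2 * (ε/2) := by
            apply mul_lt_mul_of_pos_left hn1 (by norm_num)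
          linarith
end
end

section
/- Let X, Y, Z be Polish spaces, μ a Borel probability measure on X, and f : X → Y, g : X → Z Borel maps. Assume that for every Borel set B ⊆ Y × Z there exists a Borel set B' ⊆ Z such that μ( (f,g)⁻¹(B) Δ g⁻¹(B') ) = 0, i.e. the σ-algebra generated by the pair (f,g) is contained, modulo μ-null sets, in the σ-algebra generated by g. Then there exist a Borel map s : Z → Y and a μ-conegligible Borel set F ⊆ X such that f(x) = s(g(x)) for all x ∈ F; in particular, f is μ-essentially constant on every level set of g. -/
open MeasureTheory Set

noncomputable section

/-- **Factorization of a Borel map through another one whose σ-algebra dominates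
modulo null sets** (key consequence of the minimality of equivalence relations,
Corollary A.3 of Bianchini–Daneri). -/
theorem statement_18 {X Y Z : Type*}
    [TopologicalSpace X] [PolishSpace X] [MeasurableSpace X] [BorelSpace X]
    [TopologicalSpace Y] [PolishSpace Y] [MeasurableSpace Y] [BorelSpace Y]
    [TopologicalSpace Z] [PolishSpace Z] [MeasurableSpace Z] [BorelSpace Z]
    (μ : Measure X) [IsProbabilityMeasure μ]
    (f : X → Y) (g : X → Z) (hf : Measurable f) (hg : Measurable g)
    (h : ∀ B : Set (Y × Z), MeasurableSet B →
      ∃ B' : Set Z, MeasurableSet B' ∧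
        μ (((fun x => (f x, g x)) ⁻¹' B \ g ⁻¹' B') ∪
           (g ⁻¹' B' \ (fun x => (f x, g x)) ⁻¹' B)) = 0) :
    ∃ (s : Z → Y) (F : Set X), Measurable s ∧ MeasurableSet F ∧ μ Fᶜ = 0 ∧
      ∀ x ∈ F, f x = s (g x) := by
  classical
  have hXne : Nonempty X := by
    by_contra hne
    rw [not_nonempty_iff] at hne
    have h1 : (1 : ENNReal) = 0 := by
      rw [← measure_univ (μ := μ), Set.univ_eq_empty_iff.mpr hne, measure_empty]
    exact one_ne_zero h1
  have hYne : Nonempty Y := ⟨f hXne.some⟩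
  set 𝔅 := TopologicalSpace.countableBasis Y with h𝔅
  haveI : Countable 𝔅 := (TopologicalSpace.countable_countableBasis Y).to_subtype
  have hbasis := TopologicalSpace.isBasis_countableBasis Y
  -- choose B' for each basic open set
  choose B' hB'meas hB'null using fun U : 𝔅 =>
    h ((U : Set Y) ×ˢ (univ : Set Z))
      (((TopologicalSpace.isOpen_of_mem_countableBasis U.2).measurableSet).prod
        MeasurableSet.univ)
  have hpre : ∀ U : 𝔅,
      (fun x => (f x, g x)) ⁻¹' ((U : Set Y) ×ˢ (univ : Set Z)) = f ⁻¹' (U : Set Y) := by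
    intro U; ext x; simp
  set D : 𝔅 → Set X := fun U =>
    (f ⁻¹' (U : Set Y) \ g ⁻¹' B' U) ∪ (g ⁻¹' B' U \ f ⁻¹' (U : Set Y)) with hD
  have hDnull : ∀ U, μ (D U) = 0 := by
    intro U
    have := hB'null U
    rwa [hpre U] at this
  have hDmeas : ∀ U, MeasurableSet (D U) := by
    intro U
    have h1 : MeasurableSet (f ⁻¹' (U : Set Y)) :=
      hf (TopologicalSpace.isOpen_of_mem_countableBasis U.2).measurableSet
    have h2 : MeasurableSet (g ⁻¹' B' U) := hg (hB'meas U)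
    exact (h1.diff h2).union (h2.diff h1)
  -- the coding maps into the Cantor-like space
  set φ : Y → 𝔅 → Bool := fun y U => decide (y ∈ (U : Set Y)) with hφ
  set ψ : Z → 𝔅 → Bool := fun z U => decide (z ∈ B' U) with hψ
  have hφmeas : Measurable φ := by
    refine measurable_pi_iff.mpr fun U => measurable_to_countable' fun b => ?_
    cases b
    · have : (fun y => decide (y ∈ (U : Set Y))) ⁻¹' {false} = (U : Set Y)ᶜ := by
        ext y; simp
      rw [this]
      exact (TopologicalSpace.isOpen_of_mem_countableBasis U.2).measurableSet.compl
    · have : (fun y => decide (y ∈ (U : Set Y))) ⁻¹' {true} = (U : Set Y) := by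
        ext y; simp
      rw [this]
      exact (TopologicalSpace.isOpen_of_mem_countableBasis U.2).measurableSet
  have hψmeas : Measurable ψ := by
    refine measurable_pi_iff.mpr fun U => measurable_to_countable' fun b => ?_
    cases b
    · have : (fun z => decide (z ∈ B' U)) ⁻¹' {false} = (B' U)ᶜ := by
        ext z; simp
      rw [this]; exact (hB'meas U).compl
    · have : (fun z => decide (z ∈ B' U)) ⁻¹' {true} = B' U := by
        ext z; simp
      rw [this]; exact hB'meas U
  have hφinj : Function.Injective φ := by
    intro y y' hyy'
    have hmem : ∀ U : 𝔅, y ∈ (U : Set Y) ↔ y' ∈ (U : Set Y) := by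
      intro U
      have := congrFun hyy' U
      simpa [hφ, decide_eq_decide] using this
    have : Inseparable y y' := by
      rw [inseparable_iff_forall_isOpen]
      intro s hs
      constructor
      · intro hy
        obtain ⟨v, hv𝔅, hyv, hvs⟩ := hbasis.exists_subset_of_mem_open hy hs
        exact hvs ((hmem ⟨v, hv𝔅⟩).mp hyv)
      · intro hy'
        obtain ⟨v, hv𝔅, hyv, hvs⟩ := hbasis.exists_subset_of_mem_open hy' hs
        exact hvs ((hmem ⟨v, hv𝔅⟩).mpr hyv)
    exact this.eq
  have hφemb : MeasurableEmbedding φ := hφmeas.measurableEmbedding hφinj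
  obtain ⟨r, hrmeas, hr⟩ :=
    hφemb.exists_measurable_extend (measurable_id (α := Y)) (fun _ => hYne)
  refine ⟨r ∘ ψ, (⋃ U, D U)ᶜ, hrmeas.comp hψmeas,
    (MeasurableSet.iUnion hDmeas).compl, ?_, ?_⟩
  · rw [compl_compl]
    exact measure_iUnion_null hDnull
  · intro x hx
    have hxU : ∀ U : 𝔅, f x ∈ (U : Set Y) ↔ g x ∈ B' U := by
      intro U
      have hxD : x ∉ D U := by
        intro hxD
        exact hx (Set.mem_iUnion.mpr ⟨U, hxD⟩)
      simp only [hD, Set.mem_union, Set.mem_diff, Set.mem_preimage] at hxD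
      push_neg at hxD
      constructor
      · intro hfx
        by_contra hgx
        exact hgx (hxD.1 hfx)
      · intro hgx
        by_contra hfx
        exact hfx (hxD.2 hgx)
    have hkey : φ (f x) = ψ (g x) := by
      funext U
      simp only [hφ, hψ, decide_eq_decide]
      exact hxU U
    have := congrFun hr (f x)
    simp only [Function.comp_apply, id_eq] at this
    calc f x = r (φ (f x)) := this.symm
      _ = r (ψ (g x)) := by rw [hkey]
end
end
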